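/- arXiv:math/9302209 — 5 statements merged into one kernel-verified Lean document; each statement's English description precedes it below -/
import Mathlib

section
/- (Rockafellar) Let T : E → 2^{E*} be a maximal monotone operator on a real Banach space E which is cyclically monotone and has D(T) ≠ ∅. Then there exists a proper lower semicontinuous convex function f on E such that T = ∂f, i.e. T(x) = ∂f(x) for every x ∈ E. -/
open NormedSpace

namespace RockAux

variable {E : Type*} [NormedAddCommGroup E] [NormedSpace ℝ E]

/-- Value of a chain ending at `x`, with base point `x₀, x₀'`. The list is read from the
last link to the first. -/
noncomputable def chainVal (x₀ : E) (x₀' : StrongDual ℝ E) : List (E × StrongDual ℝ E) → E → ℝ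
  | [], x => x₀' (x - x₀)
  | p :: l, x => chainVal x₀ x₀' l p.1 + p.2 (x - p.1)

/-- The points of the chain, in cyclic order, starting at the evaluation point `z`. -/
noncomputable def seqV (x₀ : E) (x₀' : StrongDual ℝ E) (z : E) (l : List (E × StrongDual ℝ E)) : ℕ → E
  | 0 => z
  | j + 1 => (l.getD j (x₀, x₀')).1

/-- The functionals of the chain. -/
noncomputable def seqV' (x₀ : E) (x₀' : StrongDual ℝ E) (l : List (E × StrongDual ℝ E)) : ℕ → StrongDual ℝ E
  | 0 => x₀'
  | j + 1 => (l.getD j (x₀, x₀')).2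

lemma chainVal_eq_sum (x₀ : E) (x₀' : StrongDual ℝ E) :
    ∀ (l : List (E × StrongDual ℝ E)) (z : E),
      chainVal x₀ x₀' l z = ∑ k ∈ Finset.range (l.length + 1),
        (seqV' x₀ x₀' l (k + 1)) (seqV x₀ x₀' z l k - seqV x₀ x₀' z l (k + 1))
  | [], z => by simp [chainVal, seqV, seqV']
  | p :: t, z => by
    have hterm : ∀ i : ℕ,
        (seqV' x₀ x₀' (p :: t) (i + 1 + 1))
          (seqV x₀ x₀' z (p :: t) (i + 1) - seqV x₀ x₀' z (p :: t) (i + 1 + 1))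
        = (seqV' x₀ x₀' t (i + 1)) (seqV x₀ x₀' p.1 t i - seqV x₀ x₀' p.1 t (i + 1)) := by
      rintro (_ | i) <;> simp [seqV, seqV']
    calc chainVal x₀ x₀' (p :: t) z
        = chainVal x₀ x₀' t p.1 + p.2 (z - p.1) := rfl
      _ = (∑ i ∈ Finset.range (t.length + 1),
            (seqV' x₀ x₀' t (i + 1)) (seqV x₀ x₀' p.1 t i - seqV x₀ x₀' p.1 t (i + 1)))
          + p.2 (z - p.1) := by rw [chainVal_eq_sum x₀ x₀' t p.1]
      _ = ∑ k ∈ Finset.range ((p :: t).length + 1),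
            (seqV' x₀ x₀' (p :: t) (k + 1))
              (seqV x₀ x₀' z (p :: t) k - seqV x₀ x₀' z (p :: t) (k + 1)) := by
          rw [show (p :: t).length + 1 = (t.length + 1) + 1 by simp]
          conv_rhs => rw [Finset.sum_range_succ']
          congr 1
          exact Finset.sum_congr rfl fun i _ => (hterm i).symm

lemma chainVal_affine (x₀ : E) (x₀' : StrongDual ℝ E) (l : List (E × StrongDual ℝ E))
    (x y : E) (a b : ℝ) (hab : a + b = 1) :
    chainVal x₀ x₀' l (a • x + b • y)
      = a * chainVal x₀ x₀' l x + b * chainVal x₀ x₀' l y := by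
  cases l with
  | nil =>
      simp only [chainVal, map_sub, map_add, map_smul, smul_eq_mul]
      linear_combination (x₀' x₀) * hab
  | cons p t =>
      simp only [chainVal, map_sub, map_add, map_smul, smul_eq_mul]
      linear_combination (p.2 p.1 - chainVal x₀ x₀' t p.1) * hab

lemma chainVal_continuous (x₀ : E) (x₀' : StrongDual ℝ E) (l : List (E × StrongDual ℝ E)) :
    Continuous (chainVal x₀ x₀' l) := by
  cases l with
  | nil =>
      exact x₀'.continuous.comp (continuous_id.sub continuous_const)
  | cons p t =>
      exact continuous_const.add
        (p.2.continuous.comp (continuous_id.sub continuous_const))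

lemma sum_Icc_one (n : ℕ) (f : ℕ → ℝ) :
    ∑ k ∈ Finset.Icc 1 n, f k = ∑ k ∈ Finset.range n, f (k + 1) := by
  rw [← Finset.Ico_add_one_right_eq_Icc, Finset.sum_Ico_eq_sum_range, show n + 1 - 1 = n from rfl]
  exact Finset.sum_congr rfl fun i _ => by rw [add_comm]

end RockAux


/-- **Rockafellar.** A maximal monotone, cyclically monotone operator `T` with `D(T) ≠ ∅` on a
real Banach space `E` is the subdifferential of a proper lower semicontinuous convex function
`f` (with values in `ℝ ∪ {∞}`, modelled as `EReal` with `f x ≠ ⊥`). -/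
theorem cyclically_monotone_eq_subdifferential
    {E : Type*} [NormedAddCommGroup E] [NormedSpace ℝ E] [CompleteSpace E]
    (T : E → Set (StrongDual ℝ E))
    (hmono : ∀ x y x' y', x' ∈ T x → y' ∈ T y → 0 ≤ (x' - y') (x - y))
    (hmax : ∀ x x', (∀ y y', y' ∈ T y → 0 ≤ (x' - y') (x - y)) → x' ∈ T x)
    (hcyc : ∀ n : ℕ, 2 ≤ n → ∀ (x : ℕ → E) (x' : ℕ → StrongDual ℝ E),
      x n = x 0 → (∀ k, 1 ≤ k → k ≤ n → x' k ∈ T (x k)) →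
      0 ≤ ∑ k ∈ Finset.Icc 1 n, (x' k) (x k - x (k - 1)))
    (hD : ∃ x, (T x).Nonempty) :
    ∃ f : E → EReal,
      (∀ x, f x ≠ ⊥) ∧ (∃ x, f x ≠ ⊤) ∧ LowerSemicontinuous f ∧
      (∀ x y : E, ∀ a b : ℝ, 0 ≤ a → 0 ≤ b → a + b = 1 →
        f (a • x + b • y) ≤ (a : EReal) * f x + (b : EReal) * f y) ∧
      ∀ x : E, T x = {x' : StrongDual ℝ E | ∀ y, ((x' (y - x) : ℝ) : EReal) + f x ≤ f y} := by
  classical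
  open RockAux in
  obtain ⟨x₀, x₀', hx₀⟩ := hD
  haveI : Nonempty {l : List (E × StrongDual ℝ E) // ∀ p ∈ l, p.2 ∈ T p.1} :=
    ⟨⟨[], fun p hp => (List.not_mem_nil hp).elim⟩⟩
  set F : E → EReal := fun x =>
    ⨆ c : {l : List (E × StrongDual ℝ E) // ∀ p ∈ l, p.2 ∈ T p.1},
      ((chainVal x₀ x₀' c.1 x : ℝ) : EReal) with hFdef
  have hle : ∀ (c : {l : List (E × StrongDual ℝ E) // ∀ p ∈ l, p.2 ∈ T p.1}) (x : E),
      ((chainVal x₀ x₀' c.1 x : ℝ) : EReal) ≤ F x := by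
    intro c x
    exact le_iSup (fun c : {l : List (E × StrongDual ℝ E) // ∀ p ∈ l, p.2 ∈ T p.1} =>
      ((chainVal x₀ x₀' c.1 x : ℝ) : EReal)) c
  have hbot : ∀ x, F x ≠ ⊥ := by
    intro x h
    have h2 := hle ⟨[], fun p hp => (List.not_mem_nil hp).elim⟩ x
    rw [h, le_bot_iff] at h2
    exact EReal.coe_ne_bot _ h2
  -- every chain value at x₀ is ≤ 0, by cyclic monotonicity
  have hchain0 : ∀ c : {l : List (E × StrongDual ℝ E) // ∀ p ∈ l, p.2 ∈ T p.1},
      chainVal x₀ x₀' c.1 x₀ ≤ 0 := by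
    rintro ⟨l, hl⟩
    rcases eq_or_ne l [] with rfl | hne
    · simp [chainVal]
    · have hn : 2 ≤ l.length + 1 := by
        have := List.length_pos_iff.2 hne; omega
      have hcycle : seqV x₀ x₀' x₀ l (l.length + 1) = seqV x₀ x₀' x₀ l 0 := by
        show (l.getD l.length (x₀, x₀')).1 = x₀
        rw [List.getD_eq_default _ _ le_rfl]
      have hmem : ∀ k, 1 ≤ k → k ≤ l.length + 1 →
          seqV' x₀ x₀' l k ∈ T (seqV x₀ x₀' x₀ l k) := by
        intro k hk1 hk2
        obtain ⟨j, rfl⟩ : ∃ j, k = j + 1 := ⟨k - 1, by omega⟩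
        show (l.getD j (x₀, x₀')).2 ∈ T (l.getD j (x₀, x₀')).1
        rcases lt_or_ge j l.length with hj | hj
        · rw [List.getD_eq_getElem _ _ hj]
          exact hl _ (List.getElem_mem hj)
        · rw [List.getD_eq_default _ _ hj]
          exact hx₀
      have h0 := hcyc (l.length + 1) hn (seqV x₀ x₀' x₀ l) (seqV' x₀ x₀' l) hcycle hmem
      rw [sum_Icc_one] at h0
      have hsum : ∑ k ∈ Finset.range (l.length + 1),
          (seqV' x₀ x₀' l (k + 1))
            (seqV x₀ x₀' x₀ l (k + 1) - seqV x₀ x₀' x₀ l (k + 1 - 1))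
          = - chainVal x₀ x₀' l x₀ := by
        rw [chainVal_eq_sum x₀ x₀' l x₀, ← Finset.sum_neg_distrib]
        refine Finset.sum_congr rfl fun k _ => ?_
        simp only [Nat.add_sub_cancel, map_sub]
        ring
      rw [hsum] at h0
      linarith
  have hFx₀ : F x₀ ≤ 0 := by
    refine iSup_le fun c => ?_
    exact_mod_cast hchain0 c
  -- T ⊆ ∂F
  have hTsub : ∀ x y (x' : StrongDual ℝ E), x' ∈ T x →
      ((x' (y - x) : ℝ) : EReal) + F x ≤ F y := by
    intro x y x' hx'
    rw [add_comm]
    refine (EReal.le_sub_iff_add_le (Or.inl (EReal.coe_ne_bot _))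
      (Or.inl (EReal.coe_ne_top _))).1 (iSup_le fun c => ?_)
    rw [EReal.le_sub_iff_add_le (Or.inl (EReal.coe_ne_bot _))
      (Or.inl (EReal.coe_ne_top _)), ← EReal.coe_add]
    have hc' : ∀ p ∈ (x, x') :: c.1, p.2 ∈ T p.1 := by
      rintro p hp
      rcases List.mem_cons.1 hp with h | h
      · subst h; exact hx'
      · exact c.2 p h
    have := hle ⟨(x, x') :: c.1, hc'⟩ y
    simpa [chainVal] using this
  have htop : F x₀ ≠ ⊤ := fun h => by simp [h] at hFx₀
  refine ⟨F, hbot, ⟨x₀, htop⟩, ?_, ?_, ?_⟩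
  · exact lowerSemicontinuous_iSup fun c =>
      (continuous_coe_real_ereal.comp (chainVal_continuous x₀ x₀' c.1)).lowerSemicontinuous
  · intro x y a b ha hb hab
    refine iSup_le fun c => ?_
    rw [chainVal_affine x₀ x₀' c.1 x y a b hab, EReal.coe_add, EReal.coe_mul, EReal.coe_mul]
    exact add_le_add
      (mul_le_mul_of_nonneg_left (hle c x) (by exact_mod_cast ha))
      (mul_le_mul_of_nonneg_left (hle c y) (by exact_mod_cast hb))
  · intro x
    ext x'
    simp only [Set.mem_setOf_eq]
    constructor
    · intro hx' y
      exact hTsub x y x' hx'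
    · intro h
      have hxt : F x ≠ ⊤ := by
        intro ht
        have h2 := h x₀
        rw [ht, EReal.add_top_of_ne_bot (EReal.coe_ne_bot _)] at h2
        exact absurd (le_trans h2 hFx₀) (by simp)
      refine hmax x x' ?_
      intro y y' hy'
      have hyt : F y ≠ ⊤ := by
        intro ht
        have h2 := hTsub y x₀ y' hy'
        rw [ht, EReal.add_top_of_ne_bot (EReal.coe_ne_bot _)] at h2
        exact absurd (le_trans h2 hFx₀) (by simp)
      obtain ⟨r, hr⟩ : ∃ r : ℝ, F x = (r : EReal) :=
        ⟨(F x).toReal, (EReal.coe_toReal hxt (hbot x)).symm⟩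
      obtain ⟨s, hs⟩ : ∃ s : ℝ, F y = (s : EReal) :=
        ⟨(F y).toReal, (EReal.coe_toReal hyt (hbot y)).symm⟩
      have h1 : x' (y - x) + r ≤ s := by
        have h2 := h y
        rw [hr, hs] at h2
        exact_mod_cast h2
      have h2 : y' (x - y) + s ≤ r := by
        have h3 := hTsub y x y' hy'
        rw [hr, hs] at h3
        exact_mod_cast h3
      simp only [ContinuousLinearMap.sub_apply, map_sub] at h1 h2 ⊢
      linarith
end

section
/- (Gossez) Let T : E → 2^{E*} be a maximal monotone operator of type (D) on a real Banach space E and let λ > 0. Then R(T̄ + λ(∂j*)^{-1}) = E*: for every w* ∈ E* there exist x** ∈ E**, x* ∈ E* and z* ∈ T̄(x**) such that x** ∈ ∂j*(x*) and w* = z* + λx*, where j*(x*) = (1/2)‖x*‖² on E*. -/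
open NormedSpace Filter Topology

/-- The Gossez extension `T̄ : E** → 2^{E*}` of `T`: `x* ∈ T̄(x**)` iff `(x**, x*)` is
monotonically related to the graph of `T` (via the canonical embedding of `E` in `E**`). -/
def gossezExtension {E : Type*} [NormedAddCommGroup E] [NormedSpace ℝ E]
    (T : E → Set (StrongDual ℝ E)) (x'' : StrongDual ℝ (StrongDual ℝ E)) : Set (StrongDual ℝ E) :=
  {x' | ∀ y y', y' ∈ T y → 0 ≤ (x'' - inclusionInDoubleDual ℝ E y) (x' - y')}

/-- `T` is of type (D): every `(x**, x*) ∈ G(T̄)` is the limit of a bounded net from `G(T)`,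
weak* in the first coordinate and in norm in the second (formulated via filters). -/
def IsTypeD {E : Type*} [NormedAddCommGroup E] [NormedSpace ℝ E]
    (T : E → Set (StrongDual ℝ E)) : Prop :=
  ∀ (x'' : StrongDual ℝ (StrongDual ℝ E)) (x' : StrongDual ℝ E), x' ∈ gossezExtension T x'' →
    ∃ l : Filter (E × StrongDual ℝ E), l.NeBot ∧
      (∀ᶠ p in l, p.2 ∈ T p.1) ∧
      (∃ M : ℝ, ∀ᶠ p in l, ‖p.1‖ ≤ M) ∧
      (∀ y' : StrongDual ℝ E, Tendsto (fun p : E × StrongDual ℝ E => y' p.1) l (𝓝 (x'' y'))) ∧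
      Tendsto (fun p : E × StrongDual ℝ E => p.2) l (𝓝 x')

section GossezAux

variable {E : Type*} [NormedAddCommGroup E] [NormedSpace ℝ E]

private lemma exists_approx {F : Type*} [NormedAddCommGroup F] [NormedSpace ℝ F] (p : StrongDual ℝ F) {ε : ℝ} (hε : 0 < ε) :
    ∃ a : F, p a + (1/2) * ‖a‖^2 ≤ -((1/2) * ‖p‖^2) + ε := by
  by_cases hp : ‖p‖ = 0
  · exact ⟨0, by simp [hp]; linarith⟩
  have hppos : 0 < ‖p‖ := (norm_nonneg p).lt_of_ne' hp
  have hδ : 0 < ε / ‖p‖ := div_pos hε hppos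
  obtain ⟨x, hx1, hx2⟩ := p.exists_lt_apply_of_lt_opNorm (r := ‖p‖ - ε / ‖p‖) (by linarith)
  rw [Real.norm_eq_abs] at hx2
  rcases le_or_gt 0 (p x) with hs | hs
  · rw [abs_of_nonneg hs] at hx2
    refine ⟨-(‖p‖ • x), ?_⟩
    have h1 : p (-(‖p‖ • x)) = -(‖p‖ * p x) := by simp
    have h2 : ‖-(‖p‖ • x)‖ ≤ ‖p‖ := by
      rw [norm_neg, norm_smul, Real.norm_eq_abs, abs_of_nonneg hppos.le]
      nlinarith
    rw [h1]
    have h3 : (1/2) * ‖-(‖p‖ • x)‖^2 ≤ (1/2) * ‖p‖^2 := by nlinarith [norm_nonneg (-(‖p‖ • x))]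
    have h4 : ‖p‖ * (‖p‖ - ε / ‖p‖) < ‖p‖ * p x := by nlinarith
    have h5 : ‖p‖ * (‖p‖ - ε / ‖p‖) = ‖p‖^2 - ε := by field_simp
    nlinarith
  · rw [abs_of_neg hs] at hx2
    refine ⟨‖p‖ • x, ?_⟩
    have h1 : p (‖p‖ • x) = ‖p‖ * p x := by simp
    have h2 : ‖(‖p‖ • x)‖ ≤ ‖p‖ := by
      rw [norm_smul, Real.norm_eq_abs, abs_of_nonneg hppos.le]
      nlinarith
    rw [h1]
    have h3 : (1/2) * ‖(‖p‖ • x)‖^2 ≤ (1/2) * ‖p‖^2 := by nlinarith [norm_nonneg (‖p‖ • x)]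
    have h4 : ‖p‖ * (‖p‖ - ε / ‖p‖) < ‖p‖ * (-(p x)) := by nlinarith
    have h5 : ‖p‖ * (‖p‖ - ε / ‖p‖) = ‖p‖^2 - ε := by field_simp
    nlinarith

private lemma ni_of_typeD (S : E → Set (StrongDual ℝ E)) (hD : IsTypeD S)
    (x'' : StrongDual ℝ (StrongDual ℝ E)) (x' : StrongDual ℝ E) {ε : ℝ} (hε : 0 < ε) :
    ∃ y y', y' ∈ S y ∧ (x'' - inclusionInDoubleDual ℝ E y) (x' - y') < ε := by
  by_cases h : x' ∈ gossezExtension S x''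
  · obtain ⟨l, hl, hgr, ⟨M, hM⟩, hw, hs⟩ := hD _ _ h
    have hM0 : (0:ℝ) ≤ ‖x''‖ + max M 0 := by positivity
    have hsub : Tendsto (fun p : E × StrongDual ℝ E => x' - p.2) l (𝓝 0) := by
      have := (tendsto_const_nhds (x := x') (f := l)).sub hs
      simpa using this
    have hnorm : Tendsto (fun p : E × StrongDual ℝ E => (‖x''‖ + max M 0) * ‖x' - p.2‖) l (𝓝 0) := by
      have := (hsub.norm).const_mul (‖x''‖ + max M 0)
      simpa using this
    have hbound : ∀ᶠ p in l, ‖(x'' - inclusionInDoubleDual ℝ E p.1) (x' - p.2)‖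
        ≤ (‖x''‖ + max M 0) * ‖x' - p.2‖ := by
      filter_upwards [hM] with p hp
      have h1 : ‖(x'' - inclusionInDoubleDual ℝ E p.1) (x' - p.2)‖
          ≤ ‖x'' - inclusionInDoubleDual ℝ E p.1‖ * ‖x' - p.2‖ :=
        ContinuousLinearMap.le_opNorm _ _
      have h2 : ‖inclusionInDoubleDual ℝ E p.1‖ ≤ ‖p.1‖ := by
        refine ContinuousLinearMap.opNorm_le_bound _ (norm_nonneg _) (fun y' => ?_)
        rw [NormedSpace.dual_def]
        exact (y'.le_opNorm p.1).trans (by rw [mul_comm])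
      have h3 : ‖x'' - inclusionInDoubleDual ℝ E p.1‖ ≤ ‖x''‖ + max M 0 := by
        refine (norm_sub_le x'' (inclusionInDoubleDual ℝ E p.1)).trans ?_
        have : ‖p.1‖ ≤ max M 0 := le_trans hp (le_max_left _ _)
        linarith [h2.trans this]
      exact h1.trans (mul_le_mul_of_nonneg_right h3 (norm_nonneg _))
    have htend : Tendsto (fun p : E × StrongDual ℝ E => (x'' - inclusionInDoubleDual ℝ E p.1) (x' - p.2))
        l (𝓝 0) := squeeze_zero_norm' hbound hnorm
    have hev : ∀ᶠ p in l, (x'' - inclusionInDoubleDual ℝ E p.1) (x' - p.2) < ε := by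
      have := htend (Iio_mem_nhds hε)
      exact this
    obtain ⟨p, hp1, hp2⟩ := (hgr.and hev).exists
    exact ⟨p.1, p.2, hp1, hp2⟩
  · simp only [gossezExtension, Set.mem_setOf_eq, not_forall] at h
    obtain ⟨y, y', hy, hlt⟩ := h
    exact ⟨y, y', hy, by push_neg at hlt; linarith⟩

set_option maxHeartbeats 1000000 in
private lemma key_aux (S : E → Set (StrongDual ℝ E))
    (hmono : ∀ x y x' y', x' ∈ S x → y' ∈ S y → 0 ≤ (x' - y') (x - y))
    (hmax : ∀ x x', (∀ y y', y' ∈ S y → 0 ≤ (x' - y') (x - y)) → x' ∈ S x) :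
    ∃ (p₂ : StrongDual ℝ (StrongDual ℝ E)) (p₁ : StrongDual ℝ E), ∀ y y', y' ∈ S y →
      p₁ y + p₂ y' - y' y ≤ -((1/2) * ‖p₁‖^2) - (1/2) * ‖p₂‖^2 := by
  classical
  -- the graph is nonempty
  have hne : ∃ y y', y' ∈ S y := by
    by_contra h
    push_neg at h
    exact h 0 0 (hmax 0 0 (fun y y' hy => absurd hy (h y y')))
  obtain ⟨y₀, y₀', hy₀⟩ := hne
  -- the epigraph of the Fitzpatrick function
  set A : Set ((E × StrongDual ℝ E) × ℝ) :=
    {q | ∀ y y', y' ∈ S y → q.1.2 y + y' q.1.1 - y' y ≤ q.2} with hA_def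
  have hq₀ : ((y₀, y₀'), y₀' y₀) ∈ A := by
    intro y y' hy
    have := hmono y₀ y y₀' y' hy₀ hy
    simp only [ContinuousLinearMap.sub_apply, map_sub] at this
    simp only []
    linarith
  -- Fitzpatrick function dominates the pairing
  have hA_pair : ∀ q ∈ A, q.1.2 q.1.1 ≤ q.2 := by
    intro q hq
    by_cases hrel : ∀ y y', y' ∈ S y → 0 ≤ (q.1.2 - y') (q.1.1 - y)
    · have hmem : q.1.2 ∈ S q.1.1 := hmax _ _ hrel
      have := hq _ _ hmem
      linarith
    · push_neg at hrel
      obtain ⟨y, y', hy, hlt⟩ := hrel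
      have h1 := hq y y' hy
      simp only [ContinuousLinearMap.sub_apply, map_sub] at hlt
      linarith
  -- the set of primal values
  set D : Set ℝ :=
    {r | ∃ q ∈ A, r = q.2 + (1/2) * ‖q.1.1‖^2 + (1/2) * ‖q.1.2‖^2} with hD_def
  have hDne : D.Nonempty := ⟨_, ⟨_, hq₀, rfl⟩⟩
  have hDlb : ∀ r ∈ D, (0:ℝ) ≤ r := by
    rintro r ⟨q, hq, rfl⟩
    have h1 := hA_pair q hq
    have h2 : -(‖q.1.2‖ * ‖q.1.1‖) ≤ q.1.2 q.1.1 := by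
      have := q.1.2.le_opNorm q.1.1
      rw [Real.norm_eq_abs] at this
      linarith [neg_abs_le (q.1.2 q.1.1)]
    nlinarith [norm_nonneg q.1.1, norm_nonneg q.1.2, sq_nonneg (‖q.1.1‖ - ‖q.1.2‖)]
  have hDbdd : BddBelow D := ⟨0, fun r hr => hDlb r hr⟩
  obtain ⟨α, hα0, hαlb⟩ : ∃ α : ℝ, 0 ≤ α ∧ ∀ r ∈ D, α ≤ r :=
    ⟨sInf D, le_csInf hDne hDlb, fun r hr => csInf_le hDbdd hr⟩
  -- the open set below the inf
  set B : Set ((E × StrongDual ℝ E) × ℝ) :=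
    {q | q.2 < α - ((1/2) * ‖q.1.1‖^2 + (1/2) * ‖q.1.2‖^2)} with hB_def
  have hBopen : IsOpen B := by
    apply isOpen_lt (f := fun q : (E × StrongDual ℝ E) × ℝ => q.2)
      (g := fun q : (E × StrongDual ℝ E) × ℝ => α - ((1/2) * ‖q.1.1‖^2 + (1/2) * ‖q.1.2‖^2))
    · exact continuous_snd
    · fun_prop
  have hBconv : Convex ℝ B := by
    rintro p hp q hq a b ha hb hab
    simp only [hB_def, Set.mem_setOf_eq] at hp hq ⊢
    have h1 : ‖(a • p + b • q).1.1‖ ≤ a * ‖p.1.1‖ + b * ‖q.1.1‖ := by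
      show ‖a • p.1.1 + b • q.1.1‖ ≤ _
      refine (norm_add_le _ _).trans ?_
      rw [norm_smul, norm_smul, Real.norm_eq_abs, Real.norm_eq_abs,
        abs_of_nonneg ha, abs_of_nonneg hb]
    have h2 : ‖(a • p + b • q).1.2‖ ≤ a * ‖p.1.2‖ + b * ‖q.1.2‖ := by
      show ‖a • p.1.2 + b • q.1.2‖ ≤ _
      refine (norm_add_le _ _).trans ?_
      rw [norm_smul, norm_smul, Real.norm_eq_abs, Real.norm_eq_abs,
        abs_of_nonneg ha, abs_of_nonneg hb]
    have h3 : (a • p + b • q).2 = a * p.2 + b * q.2 := rfl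
    have e1 : (1/2:ℝ) * ‖(a • p + b • q).1.1‖^2 ≤
        a * ((1/2) * ‖p.1.1‖^2) + b * ((1/2) * ‖q.1.1‖^2) := by
      nlinarith [norm_nonneg (a • p + b • q).1.1, norm_nonneg p.1.1, norm_nonneg q.1.1,
        sq_nonneg (‖p.1.1‖ - ‖q.1.1‖), mul_nonneg ha hb, h1,
        mul_nonneg (mul_nonneg ha hb) (sq_nonneg (‖p.1.1‖ - ‖q.1.1‖))]
    have e2 : (1/2:ℝ) * ‖(a • p + b • q).1.2‖^2 ≤
        a * ((1/2) * ‖p.1.2‖^2) + b * ((1/2) * ‖q.1.2‖^2) := by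
      nlinarith [norm_nonneg (a • p + b • q).1.2, norm_nonneg p.1.2, norm_nonneg q.1.2,
        sq_nonneg (‖p.1.2‖ - ‖q.1.2‖), mul_nonneg ha hb, h2,
        mul_nonneg (mul_nonneg ha hb) (sq_nonneg (‖p.1.2‖ - ‖q.1.2‖))]
    rw [h3]
    rcases ha.lt_or_eq with ha' | ha'
    · have l1 : a * p.2 < a * (α - (1/2 * ‖p.1.1‖^2 + 1/2 * ‖p.1.2‖^2)) :=
        mul_lt_mul_of_pos_left hp ha'
      have l2 : b * q.2 ≤ b * (α - (1/2 * ‖q.1.1‖^2 + 1/2 * ‖q.1.2‖^2)) :=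
        mul_le_mul_of_nonneg_left hq.le hb
      have hsum : a * (α - (1/2 * ‖p.1.1‖^2 + 1/2 * ‖p.1.2‖^2))
          + b * (α - (1/2 * ‖q.1.1‖^2 + 1/2 * ‖q.1.2‖^2))
          = α - (a * (1/2 * ‖p.1.1‖^2) + a * (1/2 * ‖p.1.2‖^2)
              + b * (1/2 * ‖q.1.1‖^2) + b * (1/2 * ‖q.1.2‖^2)) := by
        linear_combination α * hab
      linarith [e1, e2]
    · have hb1 : b = 1 := by linarith
      have l1 : a * p.2 ≤ a * (α - (1/2 * ‖p.1.1‖^2 + 1/2 * ‖p.1.2‖^2)) :=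
        mul_le_mul_of_nonneg_left hp.le ha
      have l2 : b * q.2 < b * (α - (1/2 * ‖q.1.1‖^2 + 1/2 * ‖q.1.2‖^2)) :=
        mul_lt_mul_of_pos_left hq (by rw [hb1]; norm_num)
      have hsum : a * (α - (1/2 * ‖p.1.1‖^2 + 1/2 * ‖p.1.2‖^2))
          + b * (α - (1/2 * ‖q.1.1‖^2 + 1/2 * ‖q.1.2‖^2))
          = α - (a * (1/2 * ‖p.1.1‖^2) + a * (1/2 * ‖p.1.2‖^2)
              + b * (1/2 * ‖q.1.1‖^2) + b * (1/2 * ‖q.1.2‖^2)) := by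
        linear_combination α * hab
      linarith [e1, e2]
  have hAconv : Convex ℝ A := by
    rintro p hp q hq a b ha hb hab
    intro y y' hy
    have h1 := hp y y' hy
    have h2 := hq y y' hy
    have e1 : (a • p + b • q).1.2 y = a * p.1.2 y + b * q.1.2 y := by
      show (a • p.1.2 + b • q.1.2) y = _
      simp [ContinuousLinearMap.add_apply, ContinuousLinearMap.smul_apply]
    have e2 : y' (a • p + b • q).1.1 = a * y' p.1.1 + b * y' q.1.1 := by
      show y' (a • p.1.1 + b • q.1.1) = _
      simp [map_add, map_smul]
    have e3 : (a • p + b • q).2 = a * p.2 + b * q.2 := rfl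
    simp only [e1, e2, e3]
    have l1 : a * (p.1.2 y + y' p.1.1 - y' y) ≤ a * p.2 := mul_le_mul_of_nonneg_left h1 ha
    have l2 : b * (q.1.2 y + y' q.1.1 - y' y) ≤ b * q.2 := mul_le_mul_of_nonneg_left h2 hb
    have hy1 : a * y' y + b * y' y = y' y := by rw [← add_mul, hab, one_mul]
    nlinarith [l1, l2]
  have hBne : (((0:E),(0:StrongDual ℝ E)), α - 1) ∈ B := by
    simp [hB_def]
  have hdisj : Disjoint B A := by
    rw [Set.disjoint_left]
    intro q hqB hqA
    have h1 : q.2 + (1/2) * ‖q.1.1‖^2 + (1/2) * ‖q.1.2‖^2 ∈ D := ⟨q, hqA, rfl⟩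
    have h2 := hαlb _ h1
    simp only [hB_def, Set.mem_setOf_eq] at hqB
    linarith
  obtain ⟨f, u, hfB, hfA⟩ := geometric_hahn_banach_open hBconv hBopen hAconv hdisj
  -- decompose f
  set c : ℝ := f (((0:E),(0:StrongDual ℝ E)), (1:ℝ)) with hc_def
  set yE : StrongDual ℝ E := f.comp (((ContinuousLinearMap.inl ℝ (E × StrongDual ℝ E) ℝ)).comp
    (ContinuousLinearMap.inl ℝ E (StrongDual ℝ E))) with hyE_def
  set Y : StrongDual ℝ (StrongDual ℝ E) := f.comp (((ContinuousLinearMap.inl ℝ (E × StrongDual ℝ E) ℝ)).comp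
    (ContinuousLinearMap.inr ℝ E (StrongDual ℝ E))) with hY_def
  have hdecomp : ∀ (a : E) (b : StrongDual ℝ E) (t : ℝ), f ((a, b), t) = yE a + Y b + t * c := by
    intro a b t
    have hsplit : ((a, b), t) = (((a, 0), 0) : (E × StrongDual ℝ E) × ℝ) + ((0, b), 0)
        + t • ((((0:E), (0:StrongDual ℝ E)), (1:ℝ))) := by
      simp [Prod.ext_iff]
    rw [hsplit, map_add, map_add, map_smul]
    simp only [hyE_def, hY_def, ContinuousLinearMap.comp_apply,
      ContinuousLinearMap.inl_apply, ContinuousLinearMap.inr_apply, smul_eq_mul]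
    rfl
  -- membership of vertical rays in A
  have hAray : ∀ t : ℝ, y₀' y₀ ≤ t → ((y₀, y₀'), t) ∈ A := by
    intro t ht y y' hy
    have h1 := hq₀ y y' hy
    simp only at h1 ⊢
    linarith
  -- c is nonnegative
  have hc0 : 0 ≤ c := by
    by_contra hc
    push_neg at hc
    set K : ℝ := yE y₀ + Y y₀' with hK
    have hray : ∀ t : ℝ, y₀' y₀ ≤ t → u ≤ K + t * c := by
      intro t ht
      have := hfA _ (hAray t ht)
      rwa [hdecomp] at this
    set t : ℝ := max (y₀' y₀) ((u - K - 1)/c) with ht_def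
    have h1 : (u - K - 1)/c ≤ t := le_max_right _ _
    have h2 : t * c ≤ (u - K - 1)/c * c := mul_le_mul_of_nonpos_right h1 hc.le
    rw [div_mul_cancel₀ _ (ne_of_lt hc)] at h2
    have := hray t (le_max_left _ _)
    linarith
  -- c is nonzero
  have hcne : c ≠ 0 := by
    intro hc
    have hBmem : ∀ (a : E) (b : StrongDual ℝ E),
        ((a, b), α - ((1/2) * ‖a‖^2 + (1/2) * ‖b‖^2) - 1) ∈ B := by
      intro a b
      simp only [hB_def, Set.mem_setOf_eq]
      norm_num
    have hlt : ∀ (a : E) (b : StrongDual ℝ E), yE a + Y b < u := by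
      intro a b
      have := hfB _ (hBmem a b)
      rw [hdecomp, hc, mul_zero, add_zero] at this
      exact this
    have hyE0 : ∀ a : E, yE a = 0 := by
      have hle : ∀ a : E, yE a ≤ 0 := by
        intro a
        by_contra hpos
        push_neg at hpos
        have h1 := hlt (((u+1)/(yE a)) • a) 0
        rw [map_smul, map_zero, smul_eq_mul, div_mul_cancel₀ _ (ne_of_gt hpos)] at h1
        have h2 := hlt 0 0
        simp at h2
        linarith
      intro a
      have h1 := hle a
      have h2 := hle (-a)
      rw [map_neg] at h2
      linarith
    have hY0 : ∀ b : StrongDual ℝ E, Y b = 0 := by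
      have hle : ∀ b : StrongDual ℝ E, Y b ≤ 0 := by
        intro b
        by_contra hpos
        push_neg at hpos
        have h1 := hlt 0 (((u+1)/(Y b)) • b)
        rw [map_smul, map_zero, smul_eq_mul, div_mul_cancel₀ _ (ne_of_gt hpos)] at h1
        have h2 := hlt 0 0
        simp at h2
        linarith
      intro b
      have h1 := hle b
      have h2 := hle (-b)
      rw [map_neg] at h2
      linarith
    have h1 := hfB _ hBne
    have h2 := hfA _ (hAray (y₀' y₀) le_rfl)
    rw [hdecomp, hyE0, hY0, hc, mul_zero] at h1 h2
    simp at h1 h2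
    linarith
  have hc : 0 < c := hc0.lt_of_ne' hcne
  -- the B-side inequality
  have hBle : ∀ (a : E) (b : StrongDual ℝ E),
      yE a + Y b + (α - ((1/2) * ‖a‖^2 + (1/2) * ‖b‖^2)) * c ≤ u := by
    intro a b
    by_contra hlt
    push_neg at hlt
    set h : ℝ := (1/2) * ‖a‖^2 + (1/2) * ‖b‖^2 with hh
    set ε : ℝ := (yE a + Y b + (α - h) * c - u)/c with hε
    have hεpos : 0 < ε := div_pos (by linarith) hc
    have hmem : ((a, b), α - h - ε) ∈ B := by
      simp only [hB_def, Set.mem_setOf_eq]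
      linarith
    have := hfB _ hmem
    rw [hdecomp] at this
    have hεc : ε * c = yE a + Y b + (α - h) * c - u := by
      rw [hε, div_mul_cancel₀ _ hcne]
    nlinarith
  -- the A-side inequality at graph points
  have hAge : ∀ y y', y' ∈ S y → u ≤ yE y + Y y' + (y' y) * c := by
    intro y y' hy
    have hmem : ((y, y'), y' y) ∈ A := by
      intro z z' hz
      have := hmono y z y' z' hy hz
      simp only [ContinuousLinearMap.sub_apply, map_sub] at this
      simp only []
      linarith
    have := hfA _ hmem
    rwa [hdecomp] at this
  -- normalize
  set p₁ : StrongDual ℝ E := (-c⁻¹) • yE with hp₁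
  set p₂ : StrongDual ℝ (StrongDual ℝ E) := (-c⁻¹) • Y with hp₂
  have hyEval : ∀ a : E, yE a = -(c * p₁ a) := by
    intro a
    rw [hp₁, ContinuousLinearMap.smul_apply, smul_eq_mul]
    field_simp
  have hYval : ∀ b : StrongDual ℝ E, Y b = -(c * p₂ b) := by
    intro b
    rw [hp₂, ContinuousLinearMap.smul_apply, smul_eq_mul]
    field_simp
  clear_value p₁ p₂
  -- the combined inequality (III)
  have hcomb : ∀ (a : E) (b : StrongDual ℝ E) (y : E) (y' : StrongDual ℝ E), y' ∈ S y →
      p₁ y + p₂ y' - y' y ≤ p₁ a + p₂ b + ((1/2) * ‖a‖^2 + (1/2) * ‖b‖^2) - α := by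
    intro a b y y' hy
    have h1 := hBle a b
    have h2 := hAge y y' hy
    rw [hyEval, hYval] at h1 h2
    have h3 : c * (p₁ y + p₂ y' - y' y)
        ≤ c * (p₁ a + p₂ b + ((1/2) * ‖a‖^2 + (1/2) * ‖b‖^2) - α) := by nlinarith
    exact le_of_mul_le_mul_left h3 hc
  -- take inf over (a, b): the gamma bound (IV)
  have hγ : ∀ (y : E) (y' : StrongDual ℝ E), y' ∈ S y →
      p₁ y + p₂ y' - y' y ≤ -((1/2) * ‖p₁‖^2) - (1/2) * ‖p₂‖^2 := by
    intro y y' hy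
    have hall : ∀ ε : ℝ, 0 < ε →
        p₁ y + p₂ y' - y' y ≤ -((1/2) * ‖p₁‖^2) - (1/2) * ‖p₂‖^2 + ε := by
      intro ε hε
      obtain ⟨a, hae⟩ := exists_approx p₁ (half_pos hε)
      obtain ⟨b, hbe⟩ := exists_approx p₂ (half_pos hε)
      have := hcomb a b y y' hy
      linarith
    by_contra hcon
    push_neg at hcon
    have := hall ((p₁ y + p₂ y' - y' y - (-((1/2) * ‖p₁‖^2) - (1/2) * ‖p₂‖^2))/2)
      (by linarith)
    linarith
  exact ⟨p₂, p₁, hγ⟩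

private lemma key (S : E → Set (StrongDual ℝ E))
    (hmono : ∀ x y x' y', x' ∈ S x → y' ∈ S y → 0 ≤ (x' - y') (x - y))
    (hmax : ∀ x x', (∀ y y', y' ∈ S y → 0 ≤ (x' - y') (x - y)) → x' ∈ S x)
    (hD : IsTypeD S) :
    ∃ (x'' : StrongDual ℝ (StrongDual ℝ E)) (x' : StrongDual ℝ E),
      (-x') ∈ gossezExtension S x'' ∧ x'' x' = ‖x'‖^2 ∧ ‖x''‖ ≤ ‖x'‖ := by
  obtain ⟨p₂, p₁, hγ⟩ := key_aux S hmono hmax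
  -- (NI) step (V)
  have hNI : p₂ p₁ ≤ -((1/2) * ‖p₁‖^2) - (1/2) * ‖p₂‖^2 := by
    have hall : ∀ ε : ℝ, 0 < ε →
        p₂ p₁ ≤ -((1/2) * ‖p₁‖^2) - (1/2) * ‖p₂‖^2 + ε := by
      intro ε hε
      obtain ⟨y, y', hy, hlt⟩ := ni_of_typeD S hD p₂ p₁ hε
      have hexp : (p₂ - inclusionInDoubleDual ℝ E y) (p₁ - y')
          = p₂ p₁ - p₂ y' - (p₁ y - y' y) := by
        simp [ContinuousLinearMap.sub_apply, map_sub, NormedSpace.dual_def]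
        ring
      rw [hexp] at hlt
      have := hγ y y' hy
      linarith
    by_contra hcon
    push_neg at hcon
    have := hall ((p₂ p₁ - (-((1/2) * ‖p₁‖^2) - (1/2) * ‖p₂‖^2))/2) (by linarith)
    linarith
  -- Cauchy-Schwarz (VI)
  have hCS : -(‖p₂‖ * ‖p₁‖) ≤ p₂ p₁ := by
    have := p₂.le_opNorm p₁
    rw [Real.norm_eq_abs] at this
    linarith [neg_abs_le (p₂ p₁)]
  have hnorm_eq : ‖p₂‖ = ‖p₁‖ := by
    nlinarith [norm_nonneg p₁, norm_nonneg p₂, sq_nonneg (‖p₁‖ - ‖p₂‖)]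
  have hpair : p₂ p₁ = -(‖p₁‖^2) := by nlinarith [sq_nonneg (‖p₁‖ - ‖p₂‖)]
  -- conclusion
  refine ⟨p₂, -p₁, ?_, ?_, ?_⟩
  · intro y y' hy
    have h1 := hγ y y' hy
    have hexp : (p₂ - inclusionInDoubleDual ℝ E y) (-(-p₁) - y')
        = p₂ p₁ - p₂ y' - (p₁ y - y' y) := by
      simp [ContinuousLinearMap.sub_apply, map_sub, NormedSpace.dual_def]
      ring
    rw [hexp]
    have h2 : ‖p₂‖^2 = ‖p₁‖^2 := by rw [hnorm_eq]
    linarith [h1, hpair, h2]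
  · rw [map_neg, hpair, norm_neg]
    ring
  · rw [norm_neg]
    exact le_of_eq hnorm_eq

end GossezAux

set_option maxHeartbeats 1600000 in
/-- **Gossez.** If `T` is maximal monotone of type (D) on a real Banach space `E` and `λ > 0`,
then `R(T̄ + λ(∂j*)⁻¹) = E*`: every `w* ∈ E*` can be written `w* = z* + λ x*` with
`z* ∈ T̄(x**)` and `x** ∈ ∂j*(x*)`, where `j*(x*) = ½‖x*‖²`. -/
theorem gossez_surjectivity
    {E : Type*} [NormedAddCommGroup E] [NormedSpace ℝ E] [CompleteSpace E]
    (T : E → Set (StrongDual ℝ E))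
    (hmono : ∀ x y x' y', x' ∈ T x → y' ∈ T y → 0 ≤ (x' - y') (x - y))
    (hmax : ∀ x x', (∀ y y', y' ∈ T y → 0 ≤ (x' - y') (x - y)) → x' ∈ T x)
    (hD : IsTypeD T) (lam : ℝ) (hlam : 0 < lam) :
    ∀ w' : StrongDual ℝ E, ∃ (x'' : StrongDual ℝ (StrongDual ℝ E)) (x' z' : StrongDual ℝ E),
      z' ∈ gossezExtension T x'' ∧
      (∀ y' : StrongDual ℝ E, x'' (y' - x') ≤ (1 / 2) * ‖y'‖ ^ 2 - (1 / 2) * ‖x'‖ ^ 2) ∧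
      w' = z' + lam • x' := by
  intro w'
  have hlamne : lam ≠ 0 := ne_of_gt hlam
  -- translated and rescaled operator
  obtain ⟨S, hSmem⟩ : ∃ S : E → Set (StrongDual ℝ E), ∀ y (s : StrongDual ℝ E),
      s ∈ S y ↔ lam • s + w' ∈ T y :=
    ⟨fun y => {s | lam • s + w' ∈ T y}, fun y s => Iff.rfl⟩
  have hSval : ∀ (s t : StrongDual ℝ E) (v : E),
      ((lam • s + w') - (lam • t + w')) v = lam * (s - t) v := by
    intro s t v
    simp [ContinuousLinearMap.sub_apply, ContinuousLinearMap.add_apply,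
      ContinuousLinearMap.smul_apply]
    ring
  have hSmono : ∀ x y x' y', x' ∈ S x → y' ∈ S y → 0 ≤ (x' - y') (x - y) := by
    intro x y x' y' hx hy
    have h1 := hmono x y _ _ ((hSmem _ _).mp hx) ((hSmem _ _).mp hy)
    rw [hSval] at h1
    nlinarith
  have hSmax : ∀ x x', (∀ y y', y' ∈ S y → 0 ≤ (x' - y') (x - y)) → x' ∈ S x := by
    intro x x' h
    rw [hSmem]
    refine hmax x _ (fun y y' hy => ?_)
    have hs : lam⁻¹ • (y' - w') ∈ S y := by
      rw [hSmem _ _, smul_smul, mul_inv_cancel₀ hlamne, one_smul]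
      simpa using hy
    have h1 := h y _ hs
    have h2 : (lam • x' + w' - y') (x - y) = lam * ((x' - lam⁻¹ • (y' - w')) (x - y)) := by
      have : lam • x' + w' - y' = lam • (x' - lam⁻¹ • (y' - w')) := by
        rw [smul_sub, smul_smul, mul_inv_cancel₀ hlamne, one_smul]
        abel
      rw [this, ContinuousLinearMap.smul_apply, smul_eq_mul]
    rw [h2]
    positivity
  -- transfer of the Gossez extension
  have hgext_transfer : ∀ (x'' : StrongDual ℝ (StrongDual ℝ E)) (x' : StrongDual ℝ E),
      x' ∈ gossezExtension S x'' → (lam • x' + w') ∈ gossezExtension T x'' := by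
    intro x'' x' hx' y y' hy
    have hs : lam⁻¹ • (y' - w') ∈ S y := by
      rw [hSmem _ _, smul_smul, mul_inv_cancel₀ hlamne, one_smul]
      simpa using hy
    have h1 := hx' y _ hs
    have h2 : (lam • x' + w') - y' = lam • (x' - lam⁻¹ • (y' - w')) := by
      rw [smul_sub, smul_smul, mul_inv_cancel₀ hlamne, one_smul]
      abel
    rw [h2, map_smul, smul_eq_mul]
    positivity
  -- S is of type (D)
  have hSD : IsTypeD S := by
    intro x'' x' hx'
    obtain ⟨l, hl, hgr, ⟨M, hM⟩, hw, hs⟩ := hD x'' _ (hgext_transfer x'' x' hx')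
    refine ⟨l.map (fun p : E × StrongDual ℝ E => (p.1, lam⁻¹ • (p.2 - w'))), Filter.map_neBot,
      ?_, ⟨M, ?_⟩, ?_, ?_⟩
    · rw [eventually_map]
      filter_upwards [hgr] with p hp
      rw [hSmem, smul_smul, mul_inv_cancel₀ hlamne, one_smul]
      simpa using hp
    · rw [eventually_map]
      filter_upwards [hM] with p hp
      exact hp
    · intro y'
      rw [tendsto_map'_iff]
      exact hw y'
    · rw [tendsto_map'_iff]
      have h1 : Tendsto (fun p : E × StrongDual ℝ E => lam⁻¹ • (p.2 - w')) l
          (𝓝 (lam⁻¹ • ((lam • x' + w') - w'))) :=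
        ((hs.sub tendsto_const_nhds).const_smul lam⁻¹)
      have h2 : lam⁻¹ • ((lam • x' + w') - w') = x' := by
        rw [add_sub_cancel_right, smul_smul, inv_mul_cancel₀ hlamne, one_smul]
      rw [h2] at h1
      exact h1
  -- apply the key lemma
  obtain ⟨x'', x', hgext, hpair, hnorm⟩ := key S hSmono hSmax hSD
  refine ⟨x'', x', w' - lam • x', ?_, ?_, ?_⟩
  · have h1 := hgext_transfer x'' (-x') hgext
    have h2 : lam • (-x') + w' = w' - lam • x' := by
      rw [smul_neg]
      abel
    rwa [h2] at h1
  · intro y'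
    have h1 : x'' (y' - x') = x'' y' - ‖x'‖^2 := by rw [map_sub, hpair]
    have h2 : x'' y' ≤ ‖x'‖ * ‖y'‖ := by
      have := x''.le_opNorm y'
      rw [Real.norm_eq_abs] at this
      have habs : x'' y' ≤ ‖x''‖ * ‖y'‖ := le_trans (le_abs_self _) this
      nlinarith [norm_nonneg y']
    rw [h1]
    nlinarith [sq_nonneg (‖x'‖ - ‖y'‖)]
  · abel
end

section
/- Let E be a reflexive real Banach space and T : E → 2^{E*} maximal monotone. Then R(T + λJ) = E* for every λ > 0, where (T + λJ)(x) = {x* + λz* : x* ∈ T(x), z* ∈ J(x)}. -/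
open NormedSpace

/-- If a continuous linear functional satisfies `f x ≤ ‖x‖²/2 + c` everywhere, then
`‖f‖²/2 ≤ c`. -/
private lemma half_sq_norm_le {F : Type*} [NormedAddCommGroup F] [NormedSpace ℝ F]
    (f : StrongDual ℝ F) (c : ℝ) (h : ∀ x, f x ≤ (1/2) * ‖x‖^2 + c) :
    (1/2) * ‖f‖^2 ≤ c := by
  have hc0 : 0 ≤ c := by have := h 0; simpa using this
  have hsq : ∀ x : F, (f x)^2 ≤ 2 * c * ‖x‖^2 := by
    intro x
    by_cases hx : x = 0
    · simp [hx]
    · have hxn : (0:ℝ) < ‖x‖ := norm_pos_iff.mpr hx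
      have hx2 : (0:ℝ) < ‖x‖^2 := by positivity
      have hs : ∀ s : ℝ, s * f x ≤ (1/2) * (s^2 * ‖x‖^2) + c := by
        intro s
        have h1 := h (s • x)
        rw [map_smul, smul_eq_mul, norm_smul] at h1
        have : (‖s‖ * ‖x‖)^2 = s^2 * ‖x‖^2 := by
          rw [mul_pow, Real.norm_eq_abs, sq_abs]
        rw [mul_pow] at h1
        calc s * f x ≤ 1/2 * (‖s‖^2 * ‖x‖^2) + c := h1
          _ = 1/2 * (s^2 * ‖x‖^2) + c := by rw [Real.norm_eq_abs, sq_abs]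
      have h2 := hs (f x / ‖x‖^2)
      have h3 : f x / ‖x‖^2 * f x = (f x)^2 / ‖x‖^2 := by ring
      have h4 : (f x / ‖x‖^2)^2 * ‖x‖^2 = (f x)^2 / ‖x‖^2 := by
        field_simp
      rw [h3, h4] at h2
      have := (div_le_iff₀ hx2).mp (by linarith : (f x)^2 / ‖x‖^2 ≤ 2 * c)
      linarith
  have hb : ∀ x : F, ‖f x‖ ≤ Real.sqrt (2*c) * ‖x‖ := by
    intro x
    have h1 : ‖f x‖ = Real.sqrt ((f x)^2) := by
      rw [Real.sqrt_sq_eq_abs, Real.norm_eq_abs]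
    rw [h1]
    calc Real.sqrt ((f x)^2) ≤ Real.sqrt (2*c*‖x‖^2) := Real.sqrt_le_sqrt (hsq x)
      _ = Real.sqrt (2*c) * Real.sqrt (‖x‖^2) := by rw [Real.sqrt_mul (by linarith)]
      _ = Real.sqrt (2*c) * ‖x‖ := by rw [Real.sqrt_sq (norm_nonneg x)]
  have hn : ‖f‖ ≤ Real.sqrt (2*c) := f.opNorm_le_bound (Real.sqrt_nonneg _) hb
  have h2 : ‖f‖^2 ≤ Real.sqrt (2*c)^2 := by
    apply pow_le_pow_left₀ (norm_nonneg f) hn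
  rw [Real.sq_sqrt (by linarith)] at h2
  linarith

set_option maxHeartbeats 2000000 in
/-- Key step: a maximal monotone operator on a reflexive Banach space contains a point
`(x, -z')` with `z'` in the duality map of `x`. -/
private lemma key_zero {E : Type*} [NormedAddCommGroup E] [NormedSpace ℝ E]
    (hrefl : Function.Surjective (inclusionInDoubleDual ℝ E))
    (T : E → Set (StrongDual ℝ E))
    (hmono : ∀ x y x' y', x' ∈ T x → y' ∈ T y → 0 ≤ (x' - y') (x - y))
    (hmax : ∀ x x', (∀ y y', y' ∈ T y → 0 ≤ (x' - y') (x - y)) → x' ∈ T x) :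
    ∃ (x : E) (z' : StrongDual ℝ E), (-z') ∈ T x ∧ z' x = ‖z'‖ * ‖x‖ ∧ ‖z'‖ = ‖x‖ := by
  classical
  -- the graph is nonempty
  obtain ⟨s₀, t₀, hG⟩ : ∃ s t, t ∈ T s := by
    by_contra h
    push_neg at h
    exact h 0 0 (hmax 0 0 (fun y y' hy => absurd hy (h y y')))
  -- expand monotonicity numerically
  have hmono' : ∀ x y x' y', x' ∈ T x → y' ∈ T y →
      y' x + x' y - y' y ≤ x' x := by
    intro x y x' y' hx hy
    have := hmono x y x' y' hx hy
    simp only [ContinuousLinearMap.sub_apply, map_sub] at this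
    linarith
  -- The two convex sets
  set C : Set ((E × StrongDual ℝ E) × ℝ) :=
    {b | b.2 < -(1/2) * (‖b.1.1‖^2 + ‖b.1.2‖^2)} with hCdef
  set B : Set ((E × StrongDual ℝ E) × ℝ) :=
    {b | ∀ s s', s' ∈ T s → s' b.1.1 + b.1.2 s - s' s ≤ b.2} with hBdef
  have hBmem : ∀ s s', s' ∈ T s → ((s, s'), s' s) ∈ B := by
    intro s s' hs r r' hr
    exact hmono' s r s' r' hs hr
  -- C is open
  have hCopen : IsOpen C := by
    have : C = {b : (E × StrongDual ℝ E) × ℝ |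
        b.2 < -(1/2) * (‖b.1.1‖^2 + ‖b.1.2‖^2)} := rfl
    rw [this]
    apply isOpen_lt
    · exact continuous_snd
    · fun_prop
  -- C is convex
  have hCconv : Convex ℝ C := by
    rintro a ha b hb p q hp hq hpq
    simp only [hCdef, Set.mem_setOf_eq] at ha hb ⊢
    simp only [Prod.fst_add, Prod.snd_add, Prod.smul_fst, Prod.smul_snd, smul_eq_mul]
    have n1 : ‖p • a.1.1 + q • b.1.1‖ ≤ p * ‖a.1.1‖ + q * ‖b.1.1‖ := by
      calc ‖p • a.1.1 + q • b.1.1‖ ≤ ‖p • a.1.1‖ + ‖q • b.1.1‖ := norm_add_le _ _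
        _ = p * ‖a.1.1‖ + q * ‖b.1.1‖ := by
            rw [norm_smul, norm_smul, Real.norm_eq_abs, Real.norm_eq_abs,
              abs_of_nonneg hp, abs_of_nonneg hq]
    have n2 : ‖p • a.1.2 + q • b.1.2‖ ≤ p * ‖a.1.2‖ + q * ‖b.1.2‖ := by
      calc ‖p • a.1.2 + q • b.1.2‖ ≤ ‖p • a.1.2‖ + ‖q • b.1.2‖ := norm_add_le _ _
        _ = p * ‖a.1.2‖ + q * ‖b.1.2‖ := by
            rw [norm_smul, norm_smul, Real.norm_eq_abs, Real.norm_eq_abs,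
              abs_of_nonneg hp, abs_of_nonneg hq]
    have s1 : ‖p • a.1.1 + q • b.1.1‖^2 ≤ (p * ‖a.1.1‖ + q * ‖b.1.1‖)^2 :=
      pow_le_pow_left₀ (norm_nonneg _) n1 2
    have s2 : ‖p • a.1.2 + q • b.1.2‖^2 ≤ (p * ‖a.1.2‖ + q * ‖b.1.2‖)^2 :=
      pow_le_pow_left₀ (norm_nonneg _) n2 2
    have c1 : (p * ‖a.1.1‖ + q * ‖b.1.1‖)^2 ≤ p * ‖a.1.1‖^2 + q * ‖b.1.1‖^2 := by
      nlinarith [sq_nonneg (‖a.1.1‖ - ‖b.1.1‖), mul_nonneg hp hq]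
    have c2 : (p * ‖a.1.2‖ + q * ‖b.1.2‖)^2 ≤ p * ‖a.1.2‖^2 + q * ‖b.1.2‖^2 := by
      nlinarith [sq_nonneg (‖a.1.2‖ - ‖b.1.2‖), mul_nonneg hp hq]
    have hkey : p * a.2 + q * b.2 <
        p * (-(1/2) * (‖a.1.1‖^2 + ‖a.1.2‖^2)) + q * (-(1/2) * (‖b.1.1‖^2 + ‖b.1.2‖^2)) := by
      rcases eq_or_lt_of_le hp with rfl | hp'
      · have hq1 : q = 1 := by linarith
        simpa [hq1] using hb
      · nlinarith [mul_lt_mul_of_pos_left ha hp', mul_le_mul_of_nonneg_left hb.le hq]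
    linarith [s1.trans c1, s2.trans c2, hkey]
  -- B is convex
  have hBconv : Convex ℝ B := by
    rintro a ha b hb p q hp hq hpq
    intro s s' hs
    have h1 := ha s s' hs
    have h2 := hb s s' hs
    simp only [Prod.fst_add, Prod.snd_add, Prod.smul_fst, Prod.smul_snd, smul_eq_mul,
      map_add, map_smul, smul_eq_mul, ContinuousLinearMap.add_apply,
      ContinuousLinearMap.coe_smul', Pi.smul_apply]
    have hss : p * s' s + q * s' s = s' s := by rw [← add_mul, hpq, one_mul]
    linarith [mul_le_mul_of_nonneg_left h1 hp, mul_le_mul_of_nonneg_left h2 hq]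
  -- for every w there is a graph point whose affine minorant dominates the pairing at w
  have hq : ∀ w : E × StrongDual ℝ E, ∃ s s', s' ∈ T s ∧ w.2 w.1 ≤ s' w.1 + w.2 s - s' s := by
    intro w
    by_cases hw : ∀ s s', s' ∈ T s → 0 ≤ (w.2 - s') (w.1 - s)
    · exact ⟨w.1, w.2, hmax _ _ hw, by simp⟩
    · push_neg at hw
      obtain ⟨s, s', hs, hlt⟩ := hw
      refine ⟨s, s', hs, ?_⟩
      simp only [ContinuousLinearMap.sub_apply, map_sub] at hlt
      linarith
  -- C and B are disjoint
  have hdisj : Disjoint C B := by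
    rw [Set.disjoint_left]
    intro b hC hB
    obtain ⟨s, s', hs, hle⟩ := hq b.1
    have h1 := hB s s' hs
    have h2 : -(‖b.1.2‖ * ‖b.1.1‖) ≤ b.1.2 b.1.1 := by
      have := b.1.2.le_opNorm b.1.1
      have habs : |b.1.2 b.1.1| ≤ ‖b.1.2‖ * ‖b.1.1‖ := by
        rwa [← Real.norm_eq_abs]
      linarith [neg_abs_le (b.1.2 b.1.1)]
    have hC' : b.2 < -(1/2) * (‖b.1.1‖^2 + ‖b.1.2‖^2) := hC
    nlinarith [sq_nonneg (‖b.1.1‖ - ‖b.1.2‖)]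
  -- separation
  obtain ⟨f, u, hfC, hfB⟩ := geometric_hahn_banach_open hCconv hCopen hBconv hdisj
  set L : (E × StrongDual ℝ E) →L[ℝ] ℝ :=
    f.comp (ContinuousLinearMap.inl ℝ (E × StrongDual ℝ E) ℝ) with hLdef
  set c : ℝ := f (0, 1) with hcdef
  have hft : ∀ (w : E × StrongDual ℝ E) (t : ℝ), f (w, t) = L w + c * t := by
    intro w t
    have h1 : ((w, t) : (E × StrongDual ℝ E) × ℝ) = (w, 0) + t • ((0 : E × StrongDual ℝ E), (1:ℝ)) := by
      simp [Prod.ext_iff]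
    rw [h1, map_add, map_smul]
    simp only [hLdef, ContinuousLinearMap.comp_apply, ContinuousLinearMap.inl_apply,
      smul_eq_mul, hcdef]
    ring
  -- the coefficient of t is positive
  have hC0 : ∀ t : ℝ, t < 0 → c * t < u := by
    intro t ht
    have hmem : (((0,0) : E × StrongDual ℝ E), t) ∈ C := by
      simp only [hCdef, Set.mem_setOf_eq, norm_zero]
      norm_num
      exact ht
    have h2 := hfC _ hmem
    rw [hft] at h2
    have hL00 : L ((0,0) : E × StrongDual ℝ E) = 0 := by
      rw [show ((0,0) : E × StrongDual ℝ E) = (0 : E × StrongDual ℝ E) from rfl, map_zero]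
    linarith
  have hc_nonneg : 0 ≤ c := by
    by_contra hc
    push_neg at hc
    rcases le_or_gt u (-1) with hu | hu
    · have := hC0 (-1) (by norm_num)
      nlinarith
    · have ht : (u+1)/c < 0 := div_neg_of_pos_of_neg (by linarith) hc
      have := hC0 _ ht
      rw [mul_div_cancel₀ _ (ne_of_lt hc)] at this
      linarith
  have hc_ne : c ≠ 0 := by
    intro hc0
    have hLlt : ∀ w : E × StrongDual ℝ E, L w < u := by
      intro w
      have hmem : (w, -(1/2) * (‖w.1‖^2 + ‖w.2‖^2) - 1) ∈ C := by
        simp only [hCdef, Set.mem_setOf_eq]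
        linarith
      have := hfC _ hmem
      rw [hft, hc0, zero_mul, add_zero] at this
      exact this
    have hL0 : ∀ w : E × StrongDual ℝ E, L w ≤ 0 := by
      intro w
      by_contra hw
      push_neg at hw
      have := hLlt (((|u|+1)/(L w)) • w)
      rw [map_smul, smul_eq_mul, div_mul_cancel₀ _ (ne_of_gt hw)] at this
      have : |u| + 1 < u := this
      have := le_abs_self u
      linarith
    have hu_pos : 0 < u := by
      have hmem : (((0,0) : E × StrongDual ℝ E), (-1 : ℝ)) ∈ C := by
        simp only [hCdef, Set.mem_setOf_eq, norm_zero]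
        norm_num
      have h2 := hfC _ hmem
      rw [hft, hc0] at h2
      have hL00 : L ((0,0) : E × StrongDual ℝ E) = 0 := by
        rw [show ((0,0) : E × StrongDual ℝ E) = (0 : E × StrongDual ℝ E) from rfl, map_zero]
      linarith
    have hu_np : u ≤ 0 := by
      have := hfB _ (hBmem s₀ t₀ hG)
      rw [hft, hc0, zero_mul, add_zero] at this
      exact le_trans this (hL0 _)
    linarith
  have hc : 0 < c := lt_of_le_of_ne hc_nonneg (Ne.symm hc_ne)
  -- the two sides of the separation
  have hA : ∀ w : E × StrongDual ℝ E, L w ≤ u + c * ((1/2) * (‖w.1‖^2 + ‖w.2‖^2)) := by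
    intro w
    by_contra h
    push_neg at h
    set d : ℝ := L w - u - c * ((1/2) * (‖w.1‖^2 + ‖w.2‖^2)) with hd
    have hd0 : 0 < d := by simp only [hd]; linarith
    have hmem : (w, -(1/2) * (‖w.1‖^2 + ‖w.2‖^2) - d/(2*c)) ∈ C := by
      simp only [hCdef, Set.mem_setOf_eq]
      have : 0 < d/(2*c) := by positivity
      linarith
    have h2 := hfC _ hmem
    rw [hft] at h2
    have h3 : c * (-(1 / 2) * (‖w.1‖ ^ 2 + ‖w.2‖ ^ 2) - d / (2 * c))
        = -(c * ((1/2) * (‖w.1‖^2 + ‖w.2‖^2))) - d/2 := by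
      field_simp
    rw [h3] at h2
    simp only [hd] at h2 hd0
    linarith
  have hBineq : ∀ s s', s' ∈ T s → u ≤ L (s, s') + c * (s' s) := by
    intro s s' hs
    have := hfB _ (hBmem s s' hs)
    rwa [hft] at this
  -- split L into its components and use reflexivity
  set ystar : StrongDual ℝ E :=
    c⁻¹ • (L.comp (ContinuousLinearMap.inl ℝ E (StrongDual ℝ E))) with hystar
  set Phi : StrongDual ℝ (StrongDual ℝ E) :=
    c⁻¹ • (L.comp (ContinuousLinearMap.inr ℝ E (StrongDual ℝ E))) with hPhi
  have hsum : ∀ (x : E) (xs : StrongDual ℝ E), L (x, xs) = c * ystar x + c * Phi xs := by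
    intro x xs
    have h1 : ((x, xs) : E × StrongDual ℝ E) = (x, 0) + (0, xs) := by
      apply Prod.ext <;> simp
    have e1 : ystar x = c⁻¹ * L (x, 0) := rfl
    have e2 : Phi xs = c⁻¹ * L (0, xs) := rfl
    rw [h1, map_add, e1, e2, mul_inv_cancel_left₀ hc_ne, mul_inv_cancel_left₀ hc_ne]
  obtain ⟨y, hy⟩ := hrefl Phi
  have hyapp : ∀ xs : StrongDual ℝ E, Phi xs = xs y := by
    intro xs
    rw [← hy]
    exact dual_def ℝ E y xs
  set v : ℝ := u / c with hv
  -- primal inequality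
  have ha' : ∀ (x : E) (xs : StrongDual ℝ E),
      ystar x + xs y ≤ (1/2) * ‖x‖^2 + ((1/2) * ‖xs‖^2 + v) := by
    intro x xs
    have h := hA (x, xs)
    rw [hsum x xs, hyapp xs] at h
    have h2 : c * (ystar x + xs y) ≤ c * ((1/2) * ‖x‖^2 + ((1/2) * ‖xs‖^2 + v)) := by
      have : c * v = u := by rw [hv, mul_div_cancel₀ _ hc_ne]
      nlinarith [h]
    exact le_of_mul_le_mul_left h2 hc
  -- dual inequality on the graph
  have hb' : ∀ s s', s' ∈ T s → v ≤ ystar s + s' y + s' s := by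
    intro s s' hs
    have h := hBineq s s' hs
    rw [hsum s s', hyapp s'] at h
    have h2 : c * v ≤ c * (ystar s + s' y + s' s) := by
      have : c * v = u := by rw [hv, mul_div_cancel₀ _ hc_ne]
      nlinarith [h]
    exact le_of_mul_le_mul_left h2 hc
  -- apply the quadratic estimate twice
  have hstep1 : ∀ xs : StrongDual ℝ E, (1/2) * ‖ystar‖^2 ≤ (1/2) * ‖xs‖^2 + v - xs y := by
    intro xs
    have := half_sq_norm_le ystar ((1/2) * ‖xs‖^2 + v - xs y)
      (fun x => by have := ha' x xs; linarith)
    linarith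
  have hstep2 : (1/2) * ‖y‖^2 ≤ v - (1/2) * ‖ystar‖^2 := by
    have h := half_sq_norm_le (inclusionInDoubleDual ℝ E y) (v - (1/2) * ‖ystar‖^2)
      (fun xs => by
        have h1 := hstep1 xs
        rw [dual_def ℝ E y xs]
        linarith)
    have hnorm : ‖inclusionInDoubleDual ℝ E y‖ = ‖y‖ :=
      (inclusionInDoubleDualLi ℝ (E := E)).norm_map y
    rw [hnorm] at h
    linarith
  have hK : (1/2) * ‖y‖^2 + (1/2) * ‖ystar‖^2 ≤ v := by linarith
  -- bound for ystar y
  have hyy : -(‖ystar‖ * ‖y‖) ≤ ystar y := by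
    have := ystar.le_opNorm y
    have habs : |ystar y| ≤ ‖ystar‖ * ‖y‖ := by rwa [← Real.norm_eq_abs]
    linarith [neg_abs_le (ystar y)]
  -- maximality gives the point
  have hmem : (-ystar) ∈ T (-y) := by
    apply hmax
    intro s s' hs
    have h1 := hb' s s' hs
    have hexp : ((-ystar) - s') ((-y) - s) = ystar y + ystar s + s' y + s' s := by
      simp only [ContinuousLinearMap.sub_apply, ContinuousLinearMap.neg_apply, map_sub,
        map_neg]
      ring
    rw [hexp]
    nlinarith [sq_nonneg (‖y‖ - ‖ystar‖)]
  -- equality case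
  have hfinal := hb' (-y) (-ystar) hmem
  have hfin : v ≤ -(ystar y) := by
    simp only [map_neg, ContinuousLinearMap.neg_apply] at hfinal
    linarith
  have hub : ystar y ≥ -(‖ystar‖ * ‖y‖) := hyy
  have hprod : ‖ystar‖ * ‖y‖ ≥ (1/2) * ‖y‖^2 + (1/2) * ‖ystar‖^2 := by linarith
  have hnorm_eq : ‖ystar‖ = ‖y‖ := by
    have h0 : (‖y‖ - ‖ystar‖)^2 ≤ 0 := by nlinarith
    have := sq_nonneg (‖y‖ - ‖ystar‖)
    have : (‖y‖ - ‖ystar‖)^2 = 0 := le_antisymm h0 this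
    have := pow_eq_zero_iff (n := 2) (by norm_num) |>.mp this
    linarith [this]
  have hval : -(ystar y) = ‖ystar‖ * ‖y‖ := by
    apply le_antisymm
    · linarith
    · rw [hnorm_eq]
      have hyy2 : ‖y‖ * ‖y‖ = (1/2) * ‖y‖^2 + (1/2) * ‖y‖^2 := by ring
      rw [hnorm_eq] at hK
      linarith
  refine ⟨-y, ystar, hmem, ?_, ?_⟩
  · rw [map_neg, norm_neg]
    linarith [hval]
  · rw [norm_neg]
    exact hnorm_eq

/-- If `E` is a reflexive real Banach space and `T : E → 2^{E*}` is maximal monotone, then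
`R(T + λJ) = E*` for every `λ > 0`, where `J` is the duality mapping. -/
theorem range_add_duality_eq_univ_of_reflexive
    {E : Type*} [NormedAddCommGroup E] [NormedSpace ℝ E] [CompleteSpace E]
    (hrefl : Function.Surjective (inclusionInDoubleDual ℝ E))
    (T : E → Set (StrongDual ℝ E))
    (hmono : ∀ x y x' y', x' ∈ T x → y' ∈ T y → 0 ≤ (x' - y') (x - y))
    (hmax : ∀ x x', (∀ y y', y' ∈ T y → 0 ≤ (x' - y') (x - y)) → x' ∈ T x)
    (lam : ℝ) (hlam : 0 < lam) :
    ∀ w' : StrongDual ℝ E, ∃ (x : E) (x' z' : StrongDual ℝ E),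
      x' ∈ T x ∧ (z' x = ‖z'‖ * ‖x‖ ∧ ‖z'‖ = ‖x‖) ∧ w' = x' + lam • z' := by
  intro w'
  have hlam' : lam ≠ 0 := ne_of_gt hlam
  set T' : E → Set (StrongDual ℝ E) := fun x => (fun a => lam⁻¹ • (a - w')) '' T x with hT'
  have hmono' : ∀ x y x' y', x' ∈ T' x → y' ∈ T' y → 0 ≤ (x' - y') (x - y) := by
    rintro x y x' y' ⟨a, ha, rfl⟩ ⟨b, hb, rfl⟩
    have h1 := hmono x y a b ha hb
    have h2 : lam⁻¹ • (a - w') - lam⁻¹ • (b - w') = lam⁻¹ • (a - b) := by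
      refine (smul_sub _ _ _).symm.trans ?_
      congr 1
      abel
    rw [h2, ContinuousLinearMap.smul_apply, smul_eq_mul]
    exact mul_nonneg (inv_nonneg.mpr hlam.le) h1
  have hmax' : ∀ x x', (∀ y y', y' ∈ T' y → 0 ≤ (x' - y') (x - y)) → x' ∈ T' x := by
    intro x x' h
    refine ⟨lam • x' + w', ?_, ?_⟩
    · apply hmax
      intro y b hb
      have h2 := h y (lam⁻¹ • (b - w')) ⟨b, hb, rfl⟩
      have hid : lam • x' + w' - b = lam • (x' - lam⁻¹ • (b - w')) := by
        rw [smul_sub, smul_inv_smul₀ hlam']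
        abel
      rw [hid, ContinuousLinearMap.smul_apply, smul_eq_mul]
      exact mul_nonneg hlam.le h2
    · show lam⁻¹ • (lam • x' + w' - w') = x'
      rw [add_sub_cancel_right, inv_smul_smul₀ hlam']
  obtain ⟨x, z', hmem, hz1, hz2⟩ := key_zero hrefl T' hmono' hmax'
  obtain ⟨a, ha, heq⟩ := hmem
  refine ⟨x, a, z', ha, ⟨hz1, hz2⟩, ?_⟩
  have heq' : lam⁻¹ • (a - w') = -z' := heq
  have h1 : lam • (lam⁻¹ • (a - w')) = lam • (-z') := by rw [heq']
  rw [smul_inv_smul₀ hlam'] at h1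
  have h2 : a - w' = -(lam • z') := by rw [h1, smul_neg]
  rw [sub_eq_iff_eq_add] at h2
  rw [h2]
  abel
end

section
/- Let E be a reflexive real Banach space and T : E → 2^{E*} a coercive maximal monotone operator. Then R(T) = E*. -/
set_option maxHeartbeats 4000000

open NormedSpace Filter Metric

section BrowderRockafellar




variable {E : Type*} [NormedAddCommGroup E] [NormedSpace ℝ E]

/-- tiny epsilon-of-room lemma -/
lemma le_add_eps {a b : ℝ} (h : ∀ ε : ℝ, 0 < ε → a ≤ b + ε) : a ≤ b := by
  by_contra hc
  push_neg at hc
  have := h ((a - b)/2) (by linarith)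
  linarith

/-- near-norm attainment for real functionals -/
lemma exists_apply_gt (g : E →L[ℝ] ℝ) {ε : ℝ} (hε : 0 < ε) :
    ∃ x : E, ‖x‖ ≤ 1 ∧ ‖g‖ - ε < g x := by
  obtain ⟨x, hx, hgx⟩ := g.exists_lt_apply_of_lt_opNorm (r := ‖g‖ - ε) (by linarith)
  rcases le_or_gt 0 (g x) with h | h
  · exact ⟨x, hx.le, by rwa [Real.norm_eq_abs, abs_of_nonneg h] at hgx⟩
  · refine ⟨-x, by simpa using hx.le, ?_⟩
    rw [map_neg]
    rwa [Real.norm_eq_abs, abs_of_neg h] at hgx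

lemma quad_bound {X V c₁ c₂ : ℝ} (hX : 0 ≤ X) (hV : 0 ≤ V) (hc₁ : 0 ≤ c₁) (hc₂ : 0 ≤ c₂)
    (h : X^2/2 + V^2/2 ≤ c₁ + c₂*X + c₂*V) : X ≤ 1 + 2*c₁ + 2*c₂^2 + c₂ := by
  nlinarith [sq_nonneg (V - c₂), sq_nonneg (X - c₂), sq_nonneg (X - c₂ - (1 + 2*c₁ + 2*c₂^2))]

lemma sq_combo {a b X Y Z : ℝ} (ha : 0 ≤ a) (hb : 0 ≤ b) (hab : a + b = 1) (hZ : 0 ≤ Z)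
    (h : Z ≤ a*X + b*Y) (hX : 0 ≤ X) (hY : 0 ≤ Y) : Z^2 ≤ a*X^2 + b*Y^2 := by
  nlinarith [mul_nonneg (mul_nonneg ha hb) (sq_nonneg (X - Y)),
    mul_le_mul h h hZ (le_trans hZ h)]

/-- the Fitzpatrick-type constraint set: the (closed convex) set of triples `(x, v, t)` such
that `t` dominates all the affine functions `y* x + v y - y* y` for `(y, y*) ∈ G`. -/
def MMC (G : Set (E × StrongDual ℝ E)) : Set (E × StrongDual ℝ E × ℝ) :=
  {p | ∀ q ∈ G, q.2 p.1 + p.2.1 q.1 - q.2 q.1 ≤ p.2.2}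

lemma mmc_graph {G : Set (E × StrongDual ℝ E)}
    (hmono : ∀ p ∈ G, ∀ q ∈ G, 0 ≤ (p.2 - q.2) (p.1 - q.1)) {q : E × StrongDual ℝ E} (hq : q ∈ G) :
    (q.1, q.2, q.2 q.1) ∈ MMC G := by
  intro r hr
  have := hmono q hq r hr
  simp only [ContinuousLinearMap.sub_apply, map_sub] at this ⊢
  linarith

lemma mmc_pairing {G : Set (E × StrongDual ℝ E)}
    (hmax : ∀ p : E × StrongDual ℝ E, (∀ q ∈ G, 0 ≤ (p.2 - q.2) (p.1 - q.1)) → p ∈ G)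
    {p : E × StrongDual ℝ E × ℝ} (hp : p ∈ MMC G) : p.2.1 p.1 ≤ p.2.2 := by
  by_contra hc
  push_neg at hc
  have hmem : (p.1, p.2.1) ∈ G := by
    refine hmax _ fun q hq => ?_
    have := hp q hq
    simp only [ContinuousLinearMap.sub_apply, map_sub]
    linarith
  have := hp _ hmem
  simp only at this
  linarith


lemma mmc_convex (G : Set (E × StrongDual ℝ E)) : Convex ℝ (MMC G) := by
  intro p hp q hq a b ha hb hab
  intro r hr
  have h1 := hp r hr
  have h2 := hq r hr
  have hab' : a * r.2 r.1 + b * r.2 r.1 = r.2 r.1 := by rw [← add_mul, hab, one_mul]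
  simp only [Prod.fst_add, Prod.snd_add, Prod.smul_fst, Prod.smul_snd, map_add, map_smul,
    ContinuousLinearMap.add_apply, ContinuousLinearMap.coe_smul', Pi.smul_apply,
    smul_eq_mul]
  nlinarith [mul_le_mul_of_nonneg_left h1 ha, mul_le_mul_of_nonneg_left h2 hb]

lemma u_convex (α : ℝ) :
    Convex ℝ {p : E × StrongDual ℝ E × ℝ | p.2.2 < α - (‖p.1‖^2/2 + ‖p.2.1‖^2/2)} := by
  intro p hp q hq a b ha hb hab
  rcases ha.eq_or_lt with rfl | ha'
  · rw [zero_add] at hab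
    subst hab
    simpa using hq
  simp only [Set.mem_setOf_eq, Prod.fst_add, Prod.snd_add, Prod.smul_fst, Prod.smul_snd,
    smul_eq_mul] at *
  have hab'' : a * α + b * α = α := by rw [← add_mul, hab, one_mul]
  have k1 : ‖a • p.1 + b • q.1‖^2 ≤ a * ‖p.1‖^2 + b * ‖q.1‖^2 := by
    have tri : ‖a • p.1 + b • q.1‖ ≤ a * ‖p.1‖ + b * ‖q.1‖ := by
      refine (norm_add_le _ _).trans ?_
      rw [norm_smul, norm_smul, Real.norm_of_nonneg ha, Real.norm_of_nonneg hb]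
    nlinarith [mul_nonneg (mul_nonneg ha hb) (sq_nonneg (‖p.1‖ - ‖q.1‖)),
      mul_le_mul tri tri (norm_nonneg _) (le_trans (norm_nonneg _) tri)]
  have k2 : ‖a • p.2.1 + b • q.2.1‖^2 ≤ a * ‖p.2.1‖^2 + b * ‖q.2.1‖^2 := by
    have tri : ‖a • p.2.1 + b • q.2.1‖ ≤ a * ‖p.2.1‖ + b * ‖q.2.1‖ := by
      refine (norm_add_le _ _).trans ?_
      rw [norm_smul, norm_smul, Real.norm_of_nonneg ha, Real.norm_of_nonneg hb]
    nlinarith [mul_nonneg (mul_nonneg ha hb) (sq_nonneg (‖p.2.1‖ - ‖q.2.1‖)),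
      mul_le_mul tri tri (norm_nonneg _) (le_trans (norm_nonneg _) tri)]
  nlinarith [mul_lt_mul_of_pos_left hp ha', mul_le_mul_of_nonneg_left hq.le hb]

lemma u_open (α : ℝ) :
    IsOpen {p : E × StrongDual ℝ E × ℝ | p.2.2 < α - (‖p.1‖^2/2 + ‖p.2.1‖^2/2)} := by
  apply isOpen_lt
  · exact continuous_snd.comp continuous_snd
  · apply Continuous.sub continuous_const
    apply Continuous.add
    · exact (((continuous_norm.comp continuous_fst).pow 2).div_const 2)
    · exact (((continuous_norm.comp (continuous_fst.comp continuous_snd)).pow 2).div_const 2)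

/-- the key "dual attainment" consequence of Hahn-Banach separation:
the infimum `α` of `t + ‖x‖²/2 + ‖v‖²/2` over `MMC G` is `≤ 0`. -/
lemma alpha_nonpos (hrefl : Function.Surjective (inclusionInDoubleDual ℝ E))
    (G : Set (E × StrongDual ℝ E)) (hne : G.Nonempty)
    (hmono : ∀ p ∈ G, ∀ q ∈ G, 0 ≤ (p.2 - q.2) (p.1 - q.1))
    (hmax : ∀ p : E × StrongDual ℝ E, (∀ q ∈ G, 0 ≤ (p.2 - q.2) (p.1 - q.1)) → p ∈ G)
    {α : ℝ} (hlb : ∀ p ∈ MMC G, α ≤ p.2.2 + (‖p.1‖^2/2 + ‖p.2.1‖^2/2)) :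
    α ≤ 0 := by
  classical
  set U : Set (E × StrongDual ℝ E × ℝ) :=
    {p | p.2.2 < α - (‖p.1‖^2/2 + ‖p.2.1‖^2/2)} with hU
  have hdisj : Disjoint U (MMC G) := by
    rw [Set.disjoint_left]
    intro p hpU hpC
    have := hlb p hpC
    have h2 : p.2.2 < α - (‖p.1‖^2/2 + ‖p.2.1‖^2/2) := hpU
    linarith
  obtain ⟨f, s, hfU, hfC⟩ := geometric_hahn_banach_open (u_convex α) (u_open α)
    (mmc_convex G) hdisj
  -- decompose f
  set g₁ : StrongDual ℝ E := f.comp (ContinuousLinearMap.inl ℝ E (StrongDual ℝ E × ℝ)) with hg₁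
  set g₂ : StrongDual ℝ (StrongDual ℝ E) := f.comp ((ContinuousLinearMap.inr ℝ E (StrongDual ℝ E × ℝ)).comp
    (ContinuousLinearMap.inl ℝ (StrongDual ℝ E) ℝ)) with hg₂
  set β : ℝ := f (0, 0, 1) with hβ
  have hdecomp : ∀ (x : E) (v : StrongDual ℝ E) (t : ℝ), f (x, v, t) = g₁ x + g₂ v + t * β := by
    intro x v t
    have hxvt : (x, v, t) = ((x, (0:StrongDual ℝ E), (0:ℝ)) + ((0:E), v, (0:ℝ)))
        + ((0:E), (0:StrongDual ℝ E), (t:ℝ)) := by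
      simp [Prod.ext_iff]
    have ht : ((0:E), (0:StrongDual ℝ E), (t:ℝ)) = t • ((0:E), (0:StrongDual ℝ E), (1:ℝ)) := by
      simp [Prod.ext_iff]
    rw [hxvt, map_add, map_add, ht, map_smul]
    simp only [smul_eq_mul]
    rfl
  clear_value g₁ g₂ β
  clear hg₁ hg₂ hβ hdisj
  obtain ⟨q₀, hq₀⟩ := hne
  have hb₀ : (q₀.1, q₀.2, q₀.2 q₀.1) ∈ MMC G := mmc_graph hmono hq₀
  -- vertical monotonicity of MMC
  have hvert : ∀ p ∈ MMC G, ∀ m : ℝ, 0 ≤ m → (p.1, p.2.1, p.2.2 + m) ∈ MMC G := by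
    intro p hp m hm r hr
    have := hp r hr
    simp only at *
    linarith
  -- β > 0
  have hβpos : 0 < β := by
    rcases lt_or_ge 0 β with h | h
    · exact h
    rcases h.eq_or_lt with h0 | hneg
    · -- β = 0
      exfalso
      have hlt : ∀ (x : E) (v : StrongDual ℝ E), g₁ x + g₂ v < s := by
        intro x v
        have hmem : (x, v, α - (‖x‖^2/2 + ‖v‖^2/2) - 1) ∈ U := by
          simp only [hU, Set.mem_setOf_eq]
          linarith
        have := hfU _ hmem
        rw [hdecomp, h0, mul_zero, add_zero] at this
        linarith
      have hzero : ∀ (x : E) (v : StrongDual ℝ E), g₁ x + g₂ v ≤ 0 := by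
        intro x v
        by_contra hc
        push_neg at hc
        obtain ⟨n, hn⟩ := exists_nat_gt (s / (g₁ x + g₂ v))
        have h2 := hlt ((n:ℝ) • x) ((n:ℝ) • v)
        rw [map_smul, map_smul, smul_eq_mul, smul_eq_mul] at h2
        have : s / (g₁ x + g₂ v) * (g₁ x + g₂ v) < (n:ℝ) * (g₁ x + g₂ v) :=
          mul_lt_mul_of_pos_right hn hc
        rw [div_mul_cancel₀ _ (ne_of_gt hc)] at this
        nlinarith
      have hspos : 0 < s := lt_of_le_of_lt (by simpa using (hzero 0 0)) (hlt 0 0)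
      have := hfC _ hb₀
      rw [hdecomp, h0, mul_zero, add_zero] at this
      have := hzero q₀.1 q₀.2
      linarith
    · -- β < 0 : contradiction via large t in MMC
      exfalso
      set L := g₁ q₀.1 + g₂ q₀.2 + (q₀.2 q₀.1) * β with hL
      set m : ℝ := max 0 ((s - L - 1) / β) with hm
      have hmem := hvert _ hb₀ m (le_max_left _ _)
      have := hfC _ hmem
      rw [hdecomp] at this
      have hmβ : m * β ≤ ((s - L - 1) / β) * β :=
        mul_le_mul_of_nonpos_right (le_max_right _ _) hneg.le
      rw [div_mul_cancel₀ _ (ne_of_lt hneg)] at hmβ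
      nlinarith
  -- normalized functionals
  set a₁ : StrongDual ℝ E := β⁻¹ • g₁ with ha₁
  set a₂ : StrongDual ℝ (StrongDual ℝ E) := β⁻¹ • g₂ with ha₂
  set s' : ℝ := s / β with hs'
  have hA : ∀ b ∈ MMC G, s' ≤ a₁ b.1 + a₂ b.2.1 + b.2.2 := by
    intro b hb
    have := hfC _ hb
    rw [show b = (b.1, b.2.1, b.2.2) from rfl, hdecomp] at this
    rw [hs', div_le_iff₀ hβpos]
    simp only [ha₁, ha₂, ContinuousLinearMap.coe_smul', Pi.smul_apply, smul_eq_mul]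
    field_simp
    linarith
  have hβne : β ≠ 0 := ne_of_gt hβpos
  have hB0 : ∀ (x : E) (v : StrongDual ℝ E),
      g₁ x + g₂ v + (α - (‖x‖^2/2 + ‖v‖^2/2)) * β ≤ s := by
    intro x v
    apply le_add_eps
    intro ε hε
    have hmem : (x, v, α - (‖x‖^2/2 + ‖v‖^2/2) - ε/β) ∈ U := by
      simp only [hU, Set.mem_setOf_eq]
      have : 0 < ε / β := by positivity
      linarith
    have := hfU _ hmem
    rw [hdecomp] at this
    have hval : (α - (‖x‖^2/2 + ‖v‖^2/2) - ε/β) * β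
        = (α - (‖x‖^2/2 + ‖v‖^2/2)) * β - ε := by
      field_simp
    linarith
  have hB : ∀ (x : E) (v : StrongDual ℝ E), a₁ x + a₂ v + α - (‖x‖^2/2 + ‖v‖^2/2) ≤ s' := by
    intro x v
    have e1 : a₁ x = β⁻¹ * g₁ x := by
      simp [ha₁]
    have e2 : a₂ v = β⁻¹ * g₂ v := by
      simp [ha₂]
    rw [hs', e1, e2, ← sub_nonneg]
    have hid : (s/β - (β⁻¹ * g₁ x + β⁻¹ * g₂ v + α - (‖x‖^2/2 + ‖v‖^2/2))) * β
        = s - (g₁ x + g₂ v + (α - (‖x‖^2/2 + ‖v‖^2/2)) * β) := by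
      field_simp
      ring
    have h3 : 0 ≤ (s/β - (β⁻¹ * g₁ x + β⁻¹ * g₂ v + α - (‖x‖^2/2 + ‖v‖^2/2))) * β := by
      rw [hid]
      have := hB0 x v
      linarith
    exact nonneg_of_mul_nonneg_left h3 hβpos
  clear_value a₁ a₂ s'
  -- reflexivity: represent -a₂ by a point z
  obtain ⟨z, hz⟩ := hrefl (-a₂)
  have hzap : ∀ v : StrongDual ℝ E, a₂ v = -(v z) := by
    intro v
    have : (inclusionInDoubleDual ℝ E z) v = (-a₂) v := by rw [hz]
    simp only [dual_def] at this
    simp only [ContinuousLinearMap.neg_apply] at this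
    linarith
  have hznorm : ‖z‖ = ‖a₂‖ := by
    have h1 : ‖inclusionInDoubleDual ℝ E z‖ = ‖z‖ :=
      (inclusionInDoubleDualLi ℝ (E := E)).norm_map z
    rw [hz] at h1
    exact h1.symm.trans (norm_neg a₂)
  -- Step 1 : the point (z, -a₁, -s') lies in MMC G
  have hC1 : (z, -a₁, -s') ∈ MMC G := by
    intro q hq
    have := hA _ (mmc_graph hmono hq)
    simp only [ContinuousLinearMap.neg_apply]
    have h2 : a₂ q.2 = -(q.2 z) := hzap q.2
    simp only at this
    linarith
  have hα1 : α ≤ -s' + (‖z‖^2/2 + ‖(-a₁ : StrongDual ℝ E)‖^2/2) := by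
    have := hlb _ hC1
    simpa using this
  rw [norm_neg, hznorm] at hα1
  -- Step 2 : s' ≥ α + ‖a₁‖²/2 + ‖a₂‖²/2
  have hs2 : α + ‖a₁‖^2/2 + ‖a₂‖^2/2 ≤ s' := by
    apply le_add_eps
    intro δ hδ
    set ε : ℝ := δ / (‖a₁‖ + ‖a₂‖ + 1) with hε
    have hεpos : 0 < ε := by positivity
    obtain ⟨x, hx1, hx2⟩ := exists_apply_gt a₁ hεpos
    obtain ⟨v, hv1, hv2⟩ := exists_apply_gt a₂ hεpos
    have hkey := hB (‖a₁‖ • x) (‖a₂‖ • v)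
    rw [map_smul, map_smul, norm_smul, norm_smul, smul_eq_mul, smul_eq_mul,
      norm_norm] at hkey
    rw [show ‖‖a₂‖‖ = ‖a₂‖ from Real.norm_of_nonneg (norm_nonneg a₂)] at hkey
    have h1 : ‖a₁‖ * (‖a₁‖ - ε) ≤ ‖a₁‖ * (a₁ x) := mul_le_mul_of_nonneg_left hx2.le (norm_nonneg _)
    have h2 : ‖a₂‖ * (‖a₂‖ - ε) ≤ ‖a₂‖ * (a₂ v) := mul_le_mul_of_nonneg_left hv2.le (norm_nonneg a₂)
    have hx1' : ‖x‖^2 ≤ 1 := by nlinarith [norm_nonneg x]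
    have hv1' : ‖v‖^2 ≤ 1 := by nlinarith [norm_nonneg v]
    have h3 : (‖a₁‖ * ‖x‖)^2 ≤ ‖a₁‖^2 := by
      have := mul_le_mul_of_nonneg_left hx1' (sq_nonneg ‖a₁‖)
      calc (‖a₁‖ * ‖x‖)^2 = ‖a₁‖^2 * ‖x‖^2 := by ring
        _ ≤ ‖a₁‖^2 * 1 := this
        _ = ‖a₁‖^2 := by ring
    have h4 : (‖a₂‖ * ‖v‖)^2 ≤ ‖a₂‖^2 := by
      have := mul_le_mul_of_nonneg_left hv1' (sq_nonneg ‖a₂‖)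
      calc (‖a₂‖ * ‖v‖)^2 = ‖a₂‖^2 * ‖v‖^2 := by ring
        _ ≤ ‖a₂‖^2 * 1 := this
        _ = ‖a₂‖^2 := by ring
    have h5 : ε * (‖a₁‖ + ‖a₂‖) ≤ δ := by
      rw [hε, div_mul_eq_mul_div, div_le_iff₀ (by positivity)]
      nlinarith [norm_nonneg a₁, norm_nonneg a₂]
    linarith
  linarith

lemma pairing_ge (x : E) (v : StrongDual ℝ E) : -(‖x‖^2/2 + ‖v‖^2/2) ≤ v x := by
  have h1 := v.le_opNorm x
  rw [Real.norm_eq_abs] at h1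
  nlinarith [neg_abs_le (v x), sq_nonneg (‖x‖ - ‖v‖)]


lemma sup_sq_step {t α A B : ℝ} (hA0 : 0 ≤ A) (hB0 : 0 ≤ B)
    (h : ∀ δ : ℝ, 0 < δ → δ ≤ 1 → ∃ u w : ℝ, u ≤ A ∧ w ≤ B ∧ A - δ < u ∧ B - δ < w ∧
      t + u^2/2 + w^2/2 ≤ α) : t + (A^2/2 + B^2/2) ≤ α := by
  apply le_add_eps
  intro ε hε
  set δ : ℝ := min 1 (ε / (A + B + 1)) with hδ
  have hδpos : 0 < δ := lt_min one_pos (by positivity)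
  have hδ1 : δ ≤ 1 := min_le_left _ _
  obtain ⟨u, w, hu, hw, hu2, hw2, hval⟩ := h δ hδpos hδ1
  have hAe : A^2 ≤ u^2 + 2*δ*A + δ^2 := by nlinarith
  have hBe : B^2 ≤ w^2 + 2*δ*B + δ^2 := by nlinarith
  have hδsq : δ^2 ≤ δ := by nlinarith
  have hδ2 : δ * (A + B + 1) ≤ ε := by
    have h4 : δ ≤ ε / (A + B + 1) := min_le_right _ _
    calc δ * (A + B + 1) ≤ (ε / (A + B + 1)) * (A + B + 1) :=
          mul_le_mul_of_nonneg_right h4 (by positivity)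
      _ = ε := by field_simp
  nlinarith [hδpos.le]

/-- The Simons–Zălinescu lemma: a maximal monotone graph on a reflexive space
contains a point `(x, v)` with `v x + ‖x‖²/2 + ‖v‖²/2 ≤ 0`. -/
lemma sz (hrefl : Function.Surjective (inclusionInDoubleDual ℝ E))
    (G : Set (E × StrongDual ℝ E)) (hne : G.Nonempty)
    (hmono : ∀ p ∈ G, ∀ q ∈ G, 0 ≤ (p.2 - q.2) (p.1 - q.1))
    (hmax : ∀ p : E × StrongDual ℝ E, (∀ q ∈ G, 0 ≤ (p.2 - q.2) (p.1 - q.1)) → p ∈ G) :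
    ∃ p ∈ G, p.2 p.1 + ‖p.1‖^2/2 + ‖p.2‖^2/2 ≤ 0 := by
  classical
  set S : Set ℝ := (fun p : E × StrongDual ℝ E × ℝ => p.2.2 + (‖p.1‖^2/2 + ‖p.2.1‖^2/2)) '' MMC G
    with hS
  obtain ⟨q₀, hq₀⟩ := hne
  have hb₀ : (q₀.1, q₀.2, q₀.2 q₀.1) ∈ MMC G := mmc_graph hmono hq₀
  have hSne : S.Nonempty := ⟨_, ⟨_, hb₀, rfl⟩⟩
  have hS0 : ∀ r ∈ S, (0:ℝ) ≤ r := by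
    rintro r ⟨p, hp, rfl⟩
    have h1 := mmc_pairing hmax hp
    have h2 := pairing_ge p.1 p.2.1
    linarith
  have hbdd : BddBelow S := ⟨0, hS0⟩
  set α : ℝ := sInf S with hα
  have hα0 : 0 ≤ α := le_csInf hSne hS0
  have hlb : ∀ p ∈ MMC G, α ≤ p.2.2 + (‖p.1‖^2/2 + ‖p.2.1‖^2/2) := by
    intro p hp
    exact csInf_le hbdd ⟨p, hp, rfl⟩
  have hαneg : α ≤ 0 := alpha_nonpos hrefl G ⟨q₀, hq₀⟩ hmono hmax hlb
  -- minimizing sequence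
  have hseq : ∀ n : ℕ, ∃ p, p ∈ MMC G ∧
      p.2.2 + (‖p.1‖^2/2 + ‖p.2.1‖^2/2) < α + 1/(n+1) := by
    intro n
    have hlt : α < α + 1/(n+1) := by
      have : (0:ℝ) < 1/(n+1) := by positivity
      linarith
    obtain ⟨r, hrS, hrlt⟩ := exists_lt_of_csInf_lt hSne hlt
    obtain ⟨p, hp, rfl⟩ := hrS
    exact ⟨p, hp, hrlt⟩
  choose pn hpC hplt using hseq
  -- uniform bounds
  set a : ℝ := ‖q₀.2‖ with ha
  set b : ℝ := ‖q₀.1‖ with hb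
  set K : ℝ := |q₀.2 q₀.1| with hK
  set c₁ : ℝ := α + 1 + K with hc₁
  set M : ℝ := 1 + 2*c₁ + 2*(a+b)^2 + (a+b) with hM
  have hc₁0 : 0 ≤ c₁ := by positivity
  have hab0 : 0 ≤ a + b := by positivity
  have hval1 : ∀ n : ℕ, (pn n).2.2 + (‖(pn n).1‖^2/2 + ‖(pn n).2.1‖^2/2) ≤ α + 1 := by
    intro n
    have h2 : (1:ℝ)/(n+1) ≤ 1 := by
      rw [div_le_one (by positivity)]
      simp
    have := hplt n
    linarith
  have htlow : ∀ n : ℕ, -(a * ‖(pn n).1‖ + b * ‖(pn n).2.1‖ + K) ≤ (pn n).2.2 := by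
    intro n
    have hcon := hpC n q₀ hq₀
    have e1 : |q₀.2 (pn n).1| ≤ a * ‖(pn n).1‖ := by
      have := q₀.2.le_opNorm (pn n).1
      rwa [Real.norm_eq_abs] at this
    have e2 : |(pn n).2.1 q₀.1| ≤ ‖(pn n).2.1‖ * b := by
      have := (pn n).2.1.le_opNorm q₀.1
      rwa [Real.norm_eq_abs] at this
    have e3 := neg_abs_le (q₀.2 (pn n).1)
    have e4 := neg_abs_le ((pn n).2.1 q₀.1)
    have e5 := le_abs_self (q₀.2 q₀.1)
    simp only [← hK] at e5
    linarith
  have ha0 : 0 ≤ a := by rw [ha]; exact norm_nonneg _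
  have hb0 : 0 ≤ b := by rw [hb]; exact norm_nonneg _
  have hXV : ∀ n : ℕ, ‖(pn n).1‖ ≤ M ∧ ‖(pn n).2.1‖ ≤ M := by
    intro n
    have h1 := hval1 n
    have h2 := htlow n
    have hsum : ‖(pn n).1‖^2/2 + ‖(pn n).2.1‖^2/2 ≤
        c₁ + (a+b) * ‖(pn n).1‖ + (a+b) * ‖(pn n).2.1‖ := by
      nlinarith [mul_nonneg hb0 (norm_nonneg (pn n).1),
        mul_nonneg ha0 (norm_nonneg (pn n).2.1)]
    constructor
    · exact quad_bound (norm_nonneg _) (norm_nonneg _) hc₁0 hab0 hsum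
    · refine quad_bound (V := ‖(pn n).1‖) (norm_nonneg _) (norm_nonneg _) hc₁0 hab0 ?_
      linarith
  set τ : ℝ := -((a+b)*M + K) with hτ
  have htbounds : ∀ n : ℕ, (pn n).2.2 ∈ Set.Icc τ (α+1) := by
    intro n
    constructor
    · have h1 := htlow n
      have h2 := (hXV n).1
      have h3 := (hXV n).2
      have hK0 : 0 ≤ K := abs_nonneg _
      nlinarith [mul_le_mul_of_nonneg_left h2 ha0, mul_le_mul_of_nonneg_left h3 hb0]
    · have h1 := hval1 n
      nlinarith [sq_nonneg ‖(pn n).1‖, sq_nonneg ‖(pn n).2.1‖]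
  -- weak-* cluster point
  set Φ : ℕ → WeakDual ℝ (StrongDual ℝ E) × WeakDual ℝ E × ℝ := fun n =>
    (StrongDual.toWeakDual (inclusionInDoubleDual ℝ E (pn n).1),
      (StrongDual.toWeakDual ((pn n).2.1), (pn n).2.2)) with hΦ
  set Kset : Set (WeakDual ℝ (StrongDual ℝ E) × WeakDual ℝ E × ℝ) :=
    ((WeakDual.toStrongDual (𝕜 := ℝ) (E := StrongDual ℝ E)) ⁻¹' closedBall 0 M) ×ˢ
      (((WeakDual.toStrongDual (𝕜 := ℝ) (E := E)) ⁻¹' closedBall 0 M) ×ˢ Set.Icc τ (α+1))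
    with hKset
  have hKcpt : IsCompact Kset :=
    (WeakDual.isCompact_closedBall (𝕜 := ℝ) (E := StrongDual ℝ E) 0 M).prod
      ((WeakDual.isCompact_closedBall (𝕜 := ℝ) (E := E) 0 M).prod isCompact_Icc)
  have hΦK : ∀ n, Φ n ∈ Kset := by
    intro n
    refine ⟨?_, ?_, htbounds n⟩
    · simp only [Set.mem_preimage, mem_closedBall_zero_iff]
      have : ‖inclusionInDoubleDual ℝ E (pn n).1‖ = ‖(pn n).1‖ :=
        (inclusionInDoubleDualLi ℝ (E := E)).norm_map (pn n).1
      rw [show WeakDual.toStrongDual (StrongDual.toWeakDual (inclusionInDoubleDual ℝ E (pn n).1))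
        = inclusionInDoubleDual ℝ E (pn n).1 from rfl]
      exact (mem_closedBall_zero_iff (E := StrongDual ℝ (StrongDual ℝ E))).2 (this.le.trans (hXV n).1)
    · simp only [Set.mem_preimage, mem_closedBall_zero_iff]
      exact (hXV n).2
  have hle : map Φ atTop ≤ 𝓟 Kset := le_principal_iff.2 (mem_map.2 (Eventually.of_forall hΦK))
  obtain ⟨cl, hclK, hcl⟩ := hKcpt.exists_clusterPt hle
  -- transfer of closed eventual properties
  have transfer : ∀ Sc : Set (WeakDual ℝ (StrongDual ℝ E) × WeakDual ℝ E × ℝ), IsClosed Sc →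
      (∀ᶠ n in atTop, Φ n ∈ Sc) → cl ∈ Sc := by
    intro Sc hSc hev
    have h1 : map Φ atTop ≤ 𝓟 Sc := le_principal_iff.2 (mem_map.2 hev)
    exact hSc.closure_subset (mem_closure_iff_clusterPt.2 (hcl.mono h1))
  obtain ⟨x₀, hx₀⟩ := hrefl (WeakDual.toStrongDual cl.1)
  set v₀ : StrongDual ℝ E := WeakDual.toStrongDual cl.2.1 with hv₀
  -- membership in MMC G
  have hmemC : (x₀, v₀, cl.2.2) ∈ MMC G := by
    intro q hq
    have hcls : IsClosed {w : WeakDual ℝ (StrongDual ℝ E) × WeakDual ℝ E × ℝ |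
        w.1 q.2 + w.2.1 q.1 - q.2 q.1 ≤ w.2.2} := by
      apply isClosed_le
      · apply Continuous.sub
        · exact (((WeakDual.eval_continuous q.2).comp continuous_fst).add
            ((WeakDual.eval_continuous q.1).comp (continuous_fst.comp continuous_snd)))
        · exact continuous_const
      · exact continuous_snd.comp continuous_snd
    have hev : ∀ᶠ n in atTop, Φ n ∈ {w : WeakDual ℝ (StrongDual ℝ E) × WeakDual ℝ E × ℝ |
        w.1 q.2 + w.2.1 q.1 - q.2 q.1 ≤ w.2.2} := by
      refine Eventually.of_forall fun n => ?_
      have := hpC n q hq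
      exact this
    have := transfer _ hcls hev
    have hx : cl.1 q.2 = q.2 x₀ := by
      rw [show cl.1 q.2 = (WeakDual.toStrongDual cl.1) q.2 from rfl, ← hx₀]
      rfl
    simp only [Set.mem_setOf_eq, hx] at this
    exact this
  -- the value inequality at the cluster point
  have hval : cl.2.2 + (‖WeakDual.toStrongDual cl.1‖^2/2 + ‖v₀‖^2/2) ≤ α := by
    have hef : ∀ (e : StrongDual ℝ E) (y : E), ‖e‖ ≤ 1 → ‖y‖ ≤ 1 →
        cl.2.2 + (cl.1 e)^2/2 + (cl.2.1 y)^2/2 ≤ α := by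
      intro e y he hy
      apply le_add_eps
      intro ε hε
      obtain ⟨m, hm⟩ := exists_nat_one_div_lt hε
      have hcls : IsClosed {w : WeakDual ℝ (StrongDual ℝ E) × WeakDual ℝ E × ℝ |
          w.2.2 + (w.1 e)^2/2 + (w.2.1 y)^2/2 ≤ α + 1/(m+1)} := by
        apply isClosed_le
        · apply Continuous.add
          · apply Continuous.add
            · exact continuous_snd.comp continuous_snd
            · exact ((((WeakDual.eval_continuous e).comp continuous_fst).pow 2).div_const 2)
          · exact ((((WeakDual.eval_continuous y).comp
              (continuous_fst.comp continuous_snd)).pow 2).div_const 2)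
        · exact continuous_const
      have hev : ∀ᶠ n in atTop, Φ n ∈ {w : WeakDual ℝ (StrongDual ℝ E) × WeakDual ℝ E × ℝ |
          w.2.2 + (w.1 e)^2/2 + (w.2.1 y)^2/2 ≤ α + 1/(m+1)} := by
        filter_upwards [eventually_ge_atTop m] with n hn
        have hmono1 : (1:ℝ)/(n+1) ≤ 1/(m+1) := by
          apply div_le_div_of_nonneg_left _ (by positivity) _
          · norm_num
          · exact_mod_cast by norm_num [hn]
        have h1 := hplt n
        have he1 : (Φ n).1 e = e ((pn n).1) := rfl
        have hy1 : (Φ n).2.1 y = ((pn n).2.1) y := rfl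
        simp only [Set.mem_setOf_eq, he1, hy1]
        have he2 : |e ((pn n).1)| ≤ ‖(pn n).1‖ := by
          have h3 := e.le_opNorm (pn n).1
          rw [Real.norm_eq_abs] at h3
          nlinarith [norm_nonneg (pn n).1, abs_nonneg (e ((pn n).1))]
        have hy2 : |((pn n).2.1) y| ≤ ‖(pn n).2.1‖ := by
          have h3 := ((pn n).2.1).le_opNorm y
          rw [Real.norm_eq_abs] at h3
          nlinarith [norm_nonneg (pn n).2.1, abs_nonneg (((pn n).2.1) y)]
        have he3 : (e ((pn n).1))^2 ≤ ‖(pn n).1‖^2 := by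
          rw [← sq_abs]
          exact pow_le_pow_left₀ (abs_nonneg _) he2 2
        have hy3 : (((pn n).2.1) y)^2 ≤ ‖(pn n).2.1‖^2 := by
          rw [← sq_abs]
          exact pow_le_pow_left₀ (abs_nonneg _) hy2 2
        have hΦval : (Φ n).2.2 = (pn n).2.2 := rfl
        rw [hΦval]
        linarith
      have := transfer _ hcls hev
      simp only [Set.mem_setOf_eq] at this
      linarith
    -- now take suprema over e and y
    set A : ℝ := ‖WeakDual.toStrongDual cl.1‖ with hA
    set B : ℝ := ‖v₀‖ with hB
    have hA0 : 0 ≤ A := by rw [hA]; exact norm_nonneg (WeakDual.toStrongDual cl.1)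
    have hB0 : 0 ≤ B := by rw [hB]; exact norm_nonneg _
    refine sup_sq_step hA0 hB0 ?_
    intro δ hδpos hδ1
    obtain ⟨e, he1, he2⟩ := exists_apply_gt (WeakDual.toStrongDual cl.1) hδpos
    obtain ⟨y, hy1, hy2⟩ := exists_apply_gt v₀ hδpos
    have hkey := hef e y he1 hy1
    have hee : cl.1 e = (WeakDual.toStrongDual cl.1) e := rfl
    have hyy : cl.2.1 y = v₀ y := rfl
    rw [hee, hyy] at hkey
    refine ⟨(WeakDual.toStrongDual cl.1) e, v₀ y, ?_, ?_, ?_, ?_, hkey⟩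
    · have h3 := (WeakDual.toStrongDual cl.1).le_opNorm e
      rw [Real.norm_eq_abs] at h3
      have h4 := le_abs_self ((WeakDual.toStrongDual cl.1) e)
      rw [← hA] at h3
      nlinarith
    · have h3 := v₀.le_opNorm y
      rw [Real.norm_eq_abs] at h3
      have h4 := le_abs_self (v₀ y)
      rw [← hB] at h3
      nlinarith
    · rw [hA]
      exact he2
    · rw [hB]
      exact hy2
  -- final equalities
  have hpair_le : v₀ x₀ ≤ cl.2.2 := mmc_pairing hmax hmemC
  have hxnorm : ‖x₀‖ = ‖WeakDual.toStrongDual cl.1‖ := by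
    have h1 : ‖inclusionInDoubleDual ℝ E x₀‖ = ‖x₀‖ :=
      (inclusionInDoubleDualLi ℝ (E := E)).norm_map x₀
    rw [hx₀] at h1
    exact h1.symm
  have hlow := pairing_ge x₀ v₀
  have hmem : (x₀, v₀) ∈ G := by
    apply hmax
    intro q hq
    have h1 := hmemC q hq
    simp only [Set.mem_setOf_eq] at h1
    have h2 : cl.2.2 ≤ v₀ x₀ := by
      rw [hxnorm] at hlow
      linarith [hval, hαneg]
    simp only [ContinuousLinearMap.sub_apply, map_sub]
    linarith
  refine ⟨(x₀, v₀), hmem, ?_⟩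
  show v₀ x₀ + ‖x₀‖^2/2 + ‖v₀‖^2/2 ≤ 0
  rw [hxnorm]
  rw [hxnorm] at hlow
  linarith [hval, hαneg, hpair_le]


end BrowderRockafellar

/-- If `E` is a reflexive real Banach space and `T : E → 2^{E*}` is a coercive maximal
monotone operator, then `R(T) = E*`. -/
theorem surjective_of_coercive_maximal_monotone
    {E : Type*} [NormedAddCommGroup E] [NormedSpace ℝ E] [CompleteSpace E]
    (hrefl : Function.Surjective (inclusionInDoubleDual ℝ E))
    (T : E → Set (StrongDual ℝ E))
    (hmono : ∀ x y x' y', x' ∈ T x → y' ∈ T y → 0 ≤ (x' - y') (x - y))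
    (hmax : ∀ x x', (∀ y y', y' ∈ T y → 0 ≤ (x' - y') (x - y)) → x' ∈ T x)
    (hcoer : Bornology.IsBounded {x | (T x).Nonempty} ∨
      ∃ c : ℝ → ℝ, Tendsto c atTop atTop ∧ ∀ x x', x' ∈ T x → c ‖x‖ * ‖x‖ ≤ x' x) :
    (⋃ x, T x) = Set.univ := by
  classical
  ext w
  simp only [Set.mem_iUnion, Set.mem_univ, iff_true]
  -- the graph of T is nonempty
  have hne : ∃ q : E × StrongDual ℝ E, q.2 ∈ T q.1 := by
    by_cases h : ∃ x x', x' ∈ T x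
    · obtain ⟨x, x', hx⟩ := h
      exact ⟨(x, x'), hx⟩
    · push_neg at h
      exact ⟨(0, 0), hmax 0 0 fun y y' hy => absurd hy (h y y')⟩
  obtain ⟨q₀, hq₀⟩ := hne
  -- apply sz to the scaled shifted graphs
  have key : ∀ n : ℕ, ∃ x : E, ∃ v : StrongDual ℝ E, v ∈ T x ∧ (v - w) x ≤ 0 ∧
      ((n:ℝ)+1) * ‖v - w‖ ≤ 2 * ‖x‖ := by
    intro n
    have hn1 : (0:ℝ) < (n:ℝ)+1 := by positivity
    set G : Set (E × StrongDual ℝ E) :=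
      {p | ∃ v, v ∈ T p.1 ∧ p.2 = ((n:ℝ)+1) • (v - w)} with hG
    have hGne : G.Nonempty := ⟨(q₀.1, ((n:ℝ)+1) • (q₀.2 - w)), ⟨q₀.2, hq₀, rfl⟩⟩
    have hGmono : ∀ p ∈ G, ∀ q ∈ G, 0 ≤ (p.2 - q.2) (p.1 - q.1) := by
      rintro p ⟨vp, hvp, hpe⟩ q ⟨vq, hvq, hqe⟩
      have hsub : p.2 - q.2 = ((n:ℝ)+1) • (vp - vq) := by
        rw [hpe, hqe, (smul_sub ((n:ℝ)+1) (vp - w) (vq - w)).symm]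
        congr 1
        abel
      rw [hsub, ContinuousLinearMap.smul_apply, smul_eq_mul]
      exact mul_nonneg hn1.le (hmono p.1 q.1 vp vq hvp hvq)
    have hGmax : ∀ p : E × StrongDual ℝ E, (∀ q ∈ G, 0 ≤ (p.2 - q.2) (p.1 - q.1)) → p ∈ G := by
      intro p hp
      set u : StrongDual ℝ E := ((n:ℝ)+1)⁻¹ • p.2 + w with hu
      have huT : u ∈ T p.1 := by
        apply hmax p.1 u
        intro y y' hy'
        have hq : (y, ((n:ℝ)+1) • (y' - w)) ∈ G := ⟨y', hy', rfl⟩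
        have h1 := hp _ hq
        have hsub : p.2 - ((n:ℝ)+1) • (y' - w) = ((n:ℝ)+1) • (u - y') := by
          rw [hu]
          match_scalars <;> field_simp
        rw [hsub, ContinuousLinearMap.smul_apply, smul_eq_mul] at h1
        exact nonneg_of_mul_nonneg_right h1 hn1
      refine ⟨u, huT, ?_⟩
      rw [hu]
      rw [add_sub_cancel_right, smul_inv_smul₀ (ne_of_gt hn1)]
    obtain ⟨p, hpG, hpineq⟩ := sz hrefl G hGne hGmono hGmax
    obtain ⟨v, hvT, hpe⟩ := hpG
    refine ⟨p.1, v, hvT, ?_, ?_⟩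
    · -- (v - w) p.1 ≤ 0
      have h2 : p.2 p.1 ≤ 0 := by
        nlinarith [sq_nonneg ‖p.1‖, sq_nonneg ‖p.2‖]
      rw [hpe, ContinuousLinearMap.smul_apply, smul_eq_mul] at h2
      by_contra hc
      push_neg at hc
      nlinarith
    · -- (n+1) ‖v - w‖ ≤ 2 ‖p.1‖
      have hnorm : ‖p.2‖ = ((n:ℝ)+1) * ‖v - w‖ := by
        rw [hpe, norm_smul, Real.norm_of_nonneg hn1.le]
      have hub : ‖p.2‖^2 ≤ 2 * ‖p.2‖ * ‖p.1‖ := by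
        have h3 := p.2.le_opNorm p.1
        rw [Real.norm_eq_abs] at h3
        nlinarith [neg_abs_le (p.2 p.1)]
      rcases eq_or_lt_of_le (norm_nonneg p.2) with h4 | h4
      · rw [← hnorm, ← h4]
        positivity
      · have h5 : ‖p.2‖ ≤ 2 * ‖p.1‖ := by
          nlinarith
        rw [← hnorm]
        exact h5
  choose xn vn hvT hvx hvnorm using key
  -- uniform bound on ‖xn‖
  obtain ⟨R, hR0, hRb⟩ : ∃ R : ℝ, 0 ≤ R ∧ ∀ n : ℕ, ‖xn n‖ ≤ R := by
    rcases hcoer with hbdd | ⟨c, hc, hcineq⟩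
    · obtain ⟨R, hR⟩ := Bornology.IsBounded.exists_norm_le hbdd
      exact ⟨max R 0, le_max_right _ _, fun n =>
        le_trans (hR _ ⟨vn n, hvT n⟩) (le_max_left _ _)⟩
    · have hev : ∀ᶠ r in atTop, ‖w‖ + 1 ≤ c r := hc.eventually_ge_atTop (‖w‖ + 1)
      obtain ⟨R₀, hR₀⟩ := eventually_atTop.1 hev
      refine ⟨max R₀ 0, le_max_right _ _, fun n => ?_⟩
      rcases lt_or_ge ‖xn n‖ R₀ with h | h
      · exact le_trans h.le (le_max_left _ _)
      · -- coercivity forces ‖xn n‖ = 0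
        have h1 := hcineq (xn n) (vn n) (hvT n)
        have h2 : (vn n) (xn n) ≤ ‖w‖ * ‖xn n‖ := by
          have h3 : (vn n - w) (xn n) ≤ 0 := hvx n
          rw [ContinuousLinearMap.sub_apply] at h3
          have h4 := w.le_opNorm (xn n)
          rw [Real.norm_eq_abs] at h4
          nlinarith [le_abs_self (w (xn n))]
        have h5 := hR₀ _ h
        have h6 : ‖xn n‖ ≤ 0 := by nlinarith [norm_nonneg (xn n)]
        linarith [le_max_right R₀ (0:ℝ), norm_nonneg (xn n), h6]
  -- weak cluster point of (xn)
  set Φ : ℕ → WeakDual ℝ (StrongDual ℝ E) := fun n =>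
    StrongDual.toWeakDual (inclusionInDoubleDual ℝ E (xn n)) with hΦ
  set Kb : Set (WeakDual ℝ (StrongDual ℝ E)) :=
    (WeakDual.toStrongDual (𝕜 := ℝ) (E := StrongDual ℝ E)) ⁻¹' closedBall 0 R with hKb
  have hKcpt : IsCompact Kb := WeakDual.isCompact_closedBall (𝕜 := ℝ) (E := StrongDual ℝ E) 0 R
  have hΦK : ∀ n, Φ n ∈ Kb := by
    intro n
    simp only [hKb, Set.mem_preimage, mem_closedBall_zero_iff]
    have h1 : ‖inclusionInDoubleDual ℝ E (xn n)‖ = ‖xn n‖ :=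
      (inclusionInDoubleDualLi ℝ (E := E)).norm_map (xn n)
    rw [show WeakDual.toStrongDual (Φ n) = inclusionInDoubleDual ℝ E (xn n) from rfl]
    exact (mem_closedBall_zero_iff (E := StrongDual ℝ (StrongDual ℝ E))).2 (h1.le.trans (hRb n))
  have hle : map Φ atTop ≤ 𝓟 Kb := le_principal_iff.2 (mem_map.2 (Eventually.of_forall hΦK))
  obtain ⟨cl, hclK, hcl⟩ := hKcpt.exists_clusterPt hle
  have transfer : ∀ Sc : Set (WeakDual ℝ (StrongDual ℝ E)), IsClosed Sc →
      (∀ᶠ n in atTop, Φ n ∈ Sc) → cl ∈ Sc := by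
    intro Sc hSc hev
    exact hSc.closure_subset (mem_closure_iff_clusterPt.2 (hcl.mono
      (le_principal_iff.2 (mem_map.2 hev))))
  obtain ⟨xb, hxb⟩ := hrefl (WeakDual.toStrongDual cl)
  -- the limit point satisfies the maximal monotonicity inequalities
  refine ⟨xb, hmax xb w ?_⟩
  intro y y' hy'
  set cy : ℝ := 2*R*(R + ‖y‖ + 1) + 1 with hcy
  have hcy0 : 0 < cy := by positivity
  have hstep : ∀ m : ℕ, -(cy/((m:ℝ)+1)) ≤ cl (w - y') - (w - y') y := by
    intro m
    have hcls : IsClosed {X : WeakDual ℝ (StrongDual ℝ E) |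
        -(cy/((m:ℝ)+1)) ≤ X (w - y') - (w - y') y} :=
      isClosed_le continuous_const ((WeakDual.eval_continuous (w - y')).sub continuous_const)
    refine transfer _ hcls ?_
    filter_upwards [eventually_ge_atTop m] with n hn
    have he1 : (Φ n) (w - y') = (w - y') (xn n) := rfl
    simp only [Set.mem_setOf_eq, he1]
    have hmono1 := hmono (xn n) y (vn n) y' (hvT n) hy'
    rw [ContinuousLinearMap.sub_apply, map_sub, map_sub] at hmono1
    have hvw : ‖vn n - w‖ ≤ 2*R/((n:ℝ)+1) := by
      rw [le_div_iff₀ (by positivity)]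
      have := hvnorm n
      have h2 := hRb n
      nlinarith
    have hnd : ‖xn n - y‖ ≤ R + ‖y‖ := by
      refine (norm_sub_le _ _).trans ?_
      have := hRb n
      linarith
    have hest : |(w - vn n) (xn n - y)| ≤ (2*R/((n:ℝ)+1)) * (R + ‖y‖) := by
      have h3 := (w - vn n).le_opNorm (xn n - y)
      rw [Real.norm_eq_abs] at h3
      have h4 : ‖w - vn n‖ = ‖vn n - w‖ := norm_sub_rev _ _
      have h5 : ‖w - vn n‖ * ‖xn n - y‖ ≤ (2*R/((n:ℝ)+1)) * (R + ‖y‖) := by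
        rw [h4]
        apply mul_le_mul hvw hnd (norm_nonneg _) (by positivity)
      linarith
    have hsplit : (w - y') (xn n) - (w - y') y
        = (w - vn n) (xn n - y) + ((vn n) (xn n) - (vn n) y - ((y') (xn n) - (y') y)) := by
      simp only [ContinuousLinearMap.sub_apply, map_sub]
      ring
    rw [hsplit]
    have harith : (2*R/((n:ℝ)+1)) * (R + ‖y‖) ≤ cy/((m:ℝ)+1) := by
      have hle1 : (1:ℝ)/((n:ℝ)+1) ≤ 1/((m:ℝ)+1) := by
        apply div_le_div_of_nonneg_left _ (by positivity) _
        · norm_num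
        · exact_mod_cast by norm_num [hn]
      have he2 : (2*R/((n:ℝ)+1)) * (R + ‖y‖) = (2*R*(R+‖y‖)) * (1/((n:ℝ)+1)) := by
        ring
      have he3 : cy/((m:ℝ)+1) = cy * (1/((m:ℝ)+1)) := by ring
      rw [he2, he3]
      have h7 : 2*R*(R+‖y‖) ≤ cy := by
        rw [hcy]
        nlinarith
      have h8 : (0:ℝ) ≤ 1/((n:ℝ)+1) := by positivity
      calc (2*R*(R+‖y‖)) * (1/((n:ℝ)+1)) ≤ cy * (1/((n:ℝ)+1)) :=
            mul_le_mul_of_nonneg_right h7 h8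
        _ ≤ cy * (1/((m:ℝ)+1)) := mul_le_mul_of_nonneg_left hle1 hcy0.le
    nlinarith [neg_abs_le ((w - vn n) (xn n - y))]
  -- pass to the limit in m
  have hfin : 0 ≤ cl (w - y') - (w - y') y := by
    by_contra hcon
    push_neg at hcon
    have hpos : 0 < -(cl (w - y') - (w - y') y)/cy := by
      apply div_pos _ hcy0
      linarith
    obtain ⟨m, hm⟩ := exists_nat_one_div_lt hpos
    have h1 := hstep m
    rw [lt_div_iff₀ hcy0] at hm
    have h2 : (1:ℝ)/((m:ℝ)+1) * cy = cy/((m:ℝ)+1) := by ring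
    rw [h2] at hm
    linarith
  have hclx : cl (w - y') = (w - y') xb := by
    rw [show cl (w - y') = (WeakDual.toStrongDual cl) (w - y') from rfl, ← hxb]
    rfl
  rw [hclx] at hfin
  simp only [ContinuousLinearMap.sub_apply, map_sub] at hfin ⊢
  linarith
end

section
/- Let T : E → 2^{E*} be a maximal monotone operator on a real Banach space E and suppose that either (i) R(T) = E*, or (ii) the norm closure of R(T) equals E* and T is coercive. Then T is locally maximal monotone. -/
open NormedSpace Filter

set_option maxHeartbeats 1600000 in
/-- If `T : E → 2^{E*}` is maximal monotone and either (i) `R(T) = E*`, or (ii) the norm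
closure of `R(T)` is `E*` and `T` is coercive, then `T` is locally maximal monotone: for
every norm-open convex `U ⊆ E*` meeting `R(T)` and every `(x, x*) ∈ E × U` monotonically
related to `G(T) ∩ (E × U)`, one has `x* ∈ T x`. -/
theorem locally_maximal_monotone_of_range_conditions
    {E : Type*} [NormedAddCommGroup E] [NormedSpace ℝ E] [CompleteSpace E]
    (T : E → Set (StrongDual ℝ E))
    (hmono : ∀ x y x' y', x' ∈ T x → y' ∈ T y → 0 ≤ (x' - y') (x - y))
    (hmax : ∀ x x', (∀ y y', y' ∈ T y → 0 ≤ (x' - y') (x - y)) → x' ∈ T x)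
    (hrange : (⋃ x, T x) = Set.univ ∨
      (closure (⋃ x, T x) = Set.univ ∧
        (Bornology.IsBounded {x | (T x).Nonempty} ∨
          ∃ c : ℝ → ℝ, Tendsto c atTop atTop ∧ ∀ x x', x' ∈ T x → c ‖x‖ * ‖x‖ ≤ x' x))) :
    ∀ U : Set (StrongDual ℝ E), IsOpen U → Convex ℝ U → (U ∩ ⋃ x, T x).Nonempty →
      ∀ (x : E) (x' : StrongDual ℝ E), x' ∈ U →
        (∀ y y', y' ∈ T y → y' ∈ U → 0 ≤ (x' - y') (x - y)) → x' ∈ T x := by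
  intro U hUopen _hUconv _hUne x x' hx'U h
  apply hmax
  intro y y' hy'
  rcases eq_or_ne x' y' with hxy' | hxy'
  · simp [hxy']
  obtain ⟨r, hr, hball⟩ := Metric.isOpen_iff.mp hUopen x' hx'U
  set d : StrongDual ℝ E := y' - x' with hd
  have hdpos : 0 < ‖d‖ := by
    rw [norm_pos_iff]
    exact sub_ne_zero.mpr (Ne.symm hxy')
  set t : ℝ := min (1/2) (r/(4*‖d‖)) with ht
  have ht0 : 0 < t := lt_min (by norm_num) (by positivity)
  have ht2 : t ≤ 1/2 := min_le_left _ _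
  have htd : t * ‖d‖ ≤ r/4 := by
    have h1 : t ≤ r/(4*‖d‖) := min_le_right _ _
    calc t * ‖d‖ ≤ r/(4*‖d‖) * ‖d‖ := mul_le_mul_of_nonneg_right h1 hdpos.le
      _ = r/4 := by field_simp
  set w0 : StrongDual ℝ E := x' + t • d with hw0
  have hw0x' : ‖w0 - x'‖ ≤ r/4 := by
    have : w0 - x' = t • d := by rw [hw0]; abel
    rw [this, norm_smul, Real.norm_eq_abs, abs_of_pos ht0]
    exact htd
  have hdapp : ∀ v : E, d v = -((x' - y') v) := by
    intro v
    simp [hd, ContinuousLinearMap.sub_apply]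
  -- core estimate
  have core : ∀ z (w : StrongDual ℝ E), w ∈ T z → w ∈ U →
      -(‖w - w0‖ * (‖x‖ + ‖z‖) / t + 2 * (‖w - w0‖ * (‖z‖ + ‖y‖))) ≤ (x' - y') (x - y) := by
    intro z w hw hwU
    set e : StrongDual ℝ E := w - w0 with he
    have hA : 0 ≤ (x' - w) (x - z) := h z w hw hwU
    have hxw : x' - w = -(t • d) - e := by rw [he, hw0]; abel
    rw [hxw] at hA
    simp only [ContinuousLinearMap.sub_apply, ContinuousLinearMap.neg_apply,
      ContinuousLinearMap.smul_apply, smul_eq_mul, hdapp] at hA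
    -- hA : 0 ≤ -(t * -((x'-y') (x-z))) - e (x-z)
    have hB : 0 ≤ (w - y') (z - y) := hmono z y w y' hw hy'
    have hwy : w - y' = (1 - t) • (x' - y') + e := by
      rw [he, hw0, hd]; module
    rw [hwy] at hB
    simp only [ContinuousLinearMap.add_apply, ContinuousLinearMap.smul_apply,
      smul_eq_mul] at hB
    -- hB : 0 ≤ (1-t) * ((x'-y') (z-y)) + e (z-y)
    have he1 : |e (x - z)| ≤ ‖e‖ * (‖x‖ + ‖z‖) := by
      calc |e (x - z)| = ‖e (x - z)‖ := (Real.norm_eq_abs _).symm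
        _ ≤ ‖e‖ * ‖x - z‖ := e.le_opNorm _
        _ ≤ ‖e‖ * (‖x‖ + ‖z‖) := by gcongr; exact norm_sub_le _ _
    have he2 : |e (z - y)| ≤ ‖e‖ * (‖z‖ + ‖y‖) := by
      calc |e (z - y)| = ‖e (z - y)‖ := (Real.norm_eq_abs _).symm
        _ ≤ ‖e‖ * ‖z - y‖ := e.le_opNorm _
        _ ≤ ‖e‖ * (‖z‖ + ‖y‖) := by gcongr; exact norm_sub_le _ _
    have hsplit : (x' - y') (x - y) = (x' - y') (x - z) + (x' - y') (z - y) := by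
      have : x - y = (x - z) + (z - y) := by abel
      rw [this, map_add]
    clear_value e w0 t d
    have hN0 : (0:ℝ) ≤ ‖e‖ := norm_nonneg _
    obtain ⟨he1l, he1r⟩ := abs_le.mp he1
    obtain ⟨he2l, he2r⟩ := abs_le.mp he2
    have hA' : 0 ≤ t * ((x' - y') (x - z)) - e (x - z) := by
      simp only [ContinuousLinearMap.sub_apply]
      linarith [hA]
    have hs1 : -(‖e‖ * (‖x‖ + ‖z‖)) / t ≤ (x' - y') (x - z) := by
      rw [div_le_iff₀ ht0]
      linarith
    have hs2 : -(2 * (‖e‖ * (‖z‖ + ‖y‖))) ≤ (x' - y') (z - y) := by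
      rcases le_or_gt 0 ((x' - y') (z - y)) with h0 | h0
      · have := mul_nonneg hN0 (add_nonneg (norm_nonneg z) (norm_nonneg y))
        linarith
      · have hprod := mul_le_mul_of_nonneg_right ht2
          (by linarith : (0:ℝ) ≤ -((x' - y') (z - y)))
        linarith
    rw [hsplit]
    rw [neg_div] at hs1
    linarith
  clear_value t d w0
  rcases hrange with hsurj | ⟨hcl, hcoer⟩
  · -- surjective case: take w = w0 exactly
    have hw0mem : w0 ∈ ⋃ x, T x := by rw [hsurj]; trivial
    obtain ⟨z, hz⟩ := Set.mem_iUnion.mp hw0mem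
    have hw0U : w0 ∈ U := hball (by
      rw [Metric.mem_ball, dist_eq_norm]
      linarith)
    have := core z w0 hz hw0U
    simpa using this
  · -- approximate case
    have hM : ∃ M : ℝ, 0 ≤ M ∧ ∀ z (w : StrongDual ℝ E), w ∈ T z → ‖w‖ ≤ ‖x'‖ + r → ‖z‖ ≤ M := by
      rcases hcoer with hbd | ⟨c, hc, hcineq⟩
      · obtain ⟨R, hR⟩ := isBounded_iff_forall_norm_le.mp hbd
        exact ⟨max R 0, le_max_right _ _,
          fun z w hw _ => (hR z ⟨w, hw⟩).trans (le_max_left _ _)⟩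
      · obtain ⟨R, hR⟩ := eventually_atTop.mp (tendsto_atTop.mp hc (‖x'‖ + r + 1))
        refine ⟨max R 1, le_trans zero_le_one (le_max_right _ _), fun z w hw hwnorm => ?_⟩
        by_contra hzc
        push_neg at hzc
        have h1 : 1 ≤ ‖z‖ := (le_max_right R 1).trans hzc.le
        have hcz : ‖x'‖ + r + 1 ≤ c ‖z‖ := hR _ ((le_max_left R 1).trans hzc.le)
        have hlow : c ‖z‖ * ‖z‖ ≤ w z := hcineq z w hw
        have hup : w z ≤ ‖w‖ * ‖z‖ := by
          calc w z ≤ |w z| := le_abs_self _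
            _ = ‖w z‖ := (Real.norm_eq_abs _).symm
            _ ≤ ‖w‖ * ‖z‖ := w.le_opNorm z
        nlinarith [mul_le_mul_of_nonneg_right hcz (norm_nonneg z),
          mul_le_mul_of_nonneg_right hwnorm (norm_nonneg z)]
    obtain ⟨M, hM0, hMb⟩ := hM
    set K : ℝ := (‖x‖ + M)/t + 2*(M + ‖y‖) with hK
    have hK0 : 0 ≤ K := by
      apply add_nonneg
      · exact div_nonneg (by positivity) ht0.le
      · positivity
    clear_value K
    have key : ∀ ε : ℝ, 0 < ε → -ε ≤ (x' - y') (x - y) := by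
      intro ε hε
      set δ : ℝ := min (r/4) (ε/(K+1)) with hδ
      have hδ0 : 0 < δ := lt_min (by linarith) (by positivity)
      have hδr : δ ≤ r/4 := min_le_left _ _
      have hδε : δ ≤ ε/(K+1) := min_le_right _ _
      clear_value δ
      have hw0cl : w0 ∈ closure (⋃ x, T x) := by rw [hcl]; trivial
      obtain ⟨w, hwmem, hwd⟩ := Metric.mem_closure_iff.mp hw0cl δ hδ0
      obtain ⟨z, hz⟩ := Set.mem_iUnion.mp hwmem
      have hew : ‖w - w0‖ < δ := by
        rw [dist_eq_norm, norm_sub_rev] at hwd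
        exact hwd
      have hwx' : ‖w - x'‖ < r/2 := by
        have hsplit : w - x' = (w - w0) + (w0 - x') := by abel
        calc ‖w - x'‖ ≤ ‖w - w0‖ + ‖w0 - x'‖ := by rw [hsplit]; exact norm_add_le _ _
          _ < r/2 := by linarith
      have hwU : w ∈ U := hball (by
        rw [Metric.mem_ball, dist_eq_norm]
        linarith)
      have hwnorm : ‖w‖ ≤ ‖x'‖ + r := by
        calc ‖w‖ = ‖(w - x') + x'‖ := by rw [sub_add_cancel]
          _ ≤ ‖w - x'‖ + ‖x'‖ := norm_add_le _ _
          _ ≤ ‖x'‖ + r := by linarith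
      have hzM := hMb z w hz hwnorm
      have hcore := core z w hz hwU
      have hQ : ‖w - w0‖ * (‖x‖ + ‖z‖) / t + 2 * (‖w - w0‖ * (‖z‖ + ‖y‖))
          ≤ δ * (‖x‖ + M) / t + 2 * (δ * (M + ‖y‖)) := by
        have g1 : ‖w - w0‖ * (‖x‖ + ‖z‖) ≤ δ * (‖x‖ + M) :=
          mul_le_mul hew.le (by linarith) (by positivity) hδ0.le
        have g2 : ‖w - w0‖ * (‖z‖ + ‖y‖) ≤ δ * (M + ‖y‖) :=
          mul_le_mul hew.le (by linarith) (by positivity) hδ0.le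
        have g3 : ‖w - w0‖ * (‖x‖ + ‖z‖) / t ≤ δ * (‖x‖ + M) / t :=
          (div_le_div_iff_of_pos_right ht0).mpr g1
        linarith
      have hδK : δ * (‖x‖ + M) / t + 2 * (δ * (M + ‖y‖)) ≤ ε := by
        have h1 : δ * (K + 1) ≤ ε := by
          rw [← le_div_iff₀ (by linarith : (0:ℝ) < K + 1)]
          exact hδε
        have h2 : δ * (‖x‖ + M) / t + 2 * (δ * (M + ‖y‖)) = δ * K := by
          rw [hK]; ring
        have h3 : δ * K ≤ δ * (K + 1) :=
          mul_le_mul_of_nonneg_left (by linarith) hδ0.le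
        linarith
      linarith
    by_contra hneg
    push_neg at hneg
    have := key (-((x' - y') (x - y)) / 2) (by linarith)
    linarith
end
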